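/- arXiv:2202.10299 — 5 statements merged into one kernel-verified Lean document; each statement's English description precedes it below -/
import Mathlib

section
/- Let H be a complex Hilbert space and let A be a pure isometry on H. If M ⊆ H is a closed subspace invariant under A, then M = ⊕_{j=0}^∞ Aʲ(R) (an orthogonal direct sum, i.e. M is the closure of the span of the pairwise orthogonal subspaces Aʲ(R), j ≥ 0), where R = M ⊖ A(M); moreover R is the unique wandering subspace for A satisfying this decomposition. -/
open scoped InnerProductSpace

theorem statement2 {H : Type*} [NormedAddCommGroup H] [InnerProductSpace ℂ H] [CompleteSpace H]
    (A : H →L[ℂ] H) (hA : Isometry A)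
    (hpure : (⨅ j : ℕ, Submodule.map ((A ^ j : H →L[ℂ] H) : H →ₗ[ℂ] H) (⊤ : Submodule ℂ H)) = ⊥)
    (M : Submodule ℂ H) (hMc : IsClosed ((M : Set H))) (hMinv : ∀ f ∈ M, A f ∈ M)
    (R : Submodule ℂ H) (hR : R = M ⊓ (Submodule.map (A : H →ₗ[ℂ] H) M)ᗮ) :
    (∀ i j : ℕ, i ≠ j → ∀ x ∈ Submodule.map ((A ^ i : H →L[ℂ] H) : H →ₗ[ℂ] H) R, ∀ y ∈ Submodule.map ((A ^ j : H →L[ℂ] H) : H →ₗ[ℂ] H) R,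
      ⟪x, y⟫_ℂ = 0) ∧
    M = (⨆ j : ℕ, Submodule.map ((A ^ j : H →L[ℂ] H) : H →ₗ[ℂ] H) R).topologicalClosure ∧
    (∀ R' : Submodule ℂ H, IsClosed ((R' : Set H)) →
      (∀ j : ℕ, 1 ≤ j → ∀ x ∈ R', ∀ y ∈ Submodule.map ((A ^ j : H →L[ℂ] H) : H →ₗ[ℂ] H) R', ⟪x, y⟫_ℂ = 0) →
      M = (⨆ j : ℕ, Submodule.map ((A ^ j : H →L[ℂ] H) : H →ₗ[ℂ] H) R').topologicalClosure → R' = R) := by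
  -- basic facts
  have hnorm : ∀ x : H, ‖A x‖ = ‖x‖ := fun x => by
    rw [← dist_zero_right, ← map_zero A, hA.dist_eq, dist_zero_right]
  have hinner : ∀ x y : H, ⟪A x, A y⟫_ℂ = ⟪x, y⟫_ℂ :=
    (⟨A.toLinearMap, hnorm⟩ : H →ₗᵢ[ℂ] H).inner_map_map
  have hinnerPow : ∀ (n : ℕ) (x y : H), ⟪(A ^ n) x, (A ^ n) y⟫_ℂ = ⟪x, y⟫_ℂ := by
    intro n
    induction n with
    | zero => simp
    | succ n ih =>
      intro x y
      rw [pow_succ]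
      simp only [ContinuousLinearMap.mul_apply]
      rw [ih, hinner]
  have hpowM : ∀ (n : ℕ) (x : H), x ∈ M → (A ^ n) x ∈ M := by
    intro n
    induction n with
    | zero => intro x hx; simpa using hx
    | succ n ih =>
      intro x hx
      rw [pow_succ']
      simp only [ContinuousLinearMap.mul_apply]
      exact hMinv _ (ih x hx)
  have hRM : ∀ x ∈ R, x ∈ M := fun x hx => ((hR ▸ hx : x ∈ M ⊓ _)).1
  have hRO : ∀ x ∈ R, x ∈ (Submodule.map (A : H →ₗ[ℂ] H) M)ᗮ := fun x hx => ((hR ▸ hx : x ∈ M ⊓ _)).2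
  -- wandering property
  have wand : ∀ i j : ℕ, i < j → ∀ x ∈ R, ∀ y ∈ R, ⟪(A ^ i) x, (A ^ j) y⟫_ℂ = 0 := by
    intro i j hij x hx y hy
    obtain ⟨k, rfl⟩ : ∃ k, j = i + (k + 1) := ⟨j - i - 1, by omega⟩
    have h1 : (A ^ (i + (k + 1))) y = (A ^ i) ((A ^ (k + 1)) y) := by
      rw [pow_add]; rfl
    rw [h1, hinnerPow]
    have h2 : (A ^ (k + 1)) y ∈ Submodule.map (A : H →ₗ[ℂ] H) M := by
      refine ⟨(A ^ k) y, hpowM k y (hRM y hy), ?_⟩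
      rw [pow_succ']; rfl
    have h3 := (Submodule.mem_orthogonal _ _).1 (hRO x hx) _ h2
    rw [← inner_conj_symm, h3, map_zero]
  have part1 : ∀ i j : ℕ, i ≠ j → ∀ x ∈ Submodule.map ((A ^ i : H →L[ℂ] H) : H →ₗ[ℂ] H) R,
      ∀ y ∈ Submodule.map ((A ^ j : H →L[ℂ] H) : H →ₗ[ℂ] H) R, ⟪x, y⟫_ℂ = 0 := by
    rintro i j hij x ⟨x', hx', rfl⟩ y ⟨y', hy', rfl⟩
    rcases lt_or_gt_of_ne hij with h | h
    · exact wand i j h x' hx' y' hy'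
    · exact (by rw [← inner_conj_symm, wand j i h y' hy' x' hx', map_zero] : ⟪(A ^ i) x', (A ^ j) y'⟫_ℂ = 0)
  -- closedness of A M
  have hAMc : IsClosed ((Submodule.map (A : H →ₗ[ℂ] H) M : Set H)) := by
    have := hA.isClosedEmbedding.isClosedMap _ hMc
    simpa [Submodule.map_coe] using this
  haveI : CompleteSpace (Submodule.map (A : H →ₗ[ℂ] H) M) := hAMc.completeSpace_coe
  have hAMleM : ∀ x ∈ Submodule.map (A : H →ₗ[ℂ] H) M, x ∈ M := by
    rintro x ⟨m, hm, rfl⟩; exact hMinv m hm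
  -- the key lemma: an element of M orthogonal to all Aʲ R is zero
  have key : ∀ g ∈ M, (∀ j : ℕ, ∀ u ∈ Submodule.map ((A ^ j : H →L[ℂ] H) : H →ₗ[ℂ] H) R, ⟪u, g⟫_ℂ = 0) → g = 0 := by
    intro g hgM hgO
    have hg : ∀ n : ℕ, g ∈ Submodule.map ((A ^ n : H →L[ℂ] H) : H →ₗ[ℂ] H) M := by
      intro n
      induction n with
      | zero => exact ⟨g, hgM, by simp⟩
      | succ n ih =>
        obtain ⟨m, hm, hgm⟩ := ih
        set q : H := (Submodule.orthogonalProjectionOnto (Submodule.map (A : H →ₗ[ℂ] H) M) m : H) with hq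
        have hqAM : q ∈ Submodule.map (A : H →ₗ[ℂ] H) M := (Submodule.orthogonalProjectionOnto (Submodule.map (A : H →ₗ[ℂ] H) M) m).2
        obtain ⟨h, hh, hqh⟩ := hqAM
        have hrO : m - q ∈ (Submodule.map (A : H →ₗ[ℂ] H) M)ᗮ :=
          Submodule.sub_starProjection_mem_orthogonal m
        have hrR : m - q ∈ R := by
          rw [hR]
          exact ⟨M.sub_mem hm (hAMleM q ⟨h, hh, hqh⟩), hrO⟩
        have hsplit : g = (A ^ n) (A h) + (A ^ n) (m - q) := by
          rw [← hgm, ContinuousLinearMap.coe_coe, ← map_add, show A h = q from hqh]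
          congr 1
          abel
        have h1 : ⟪(A ^ n) (m - q), g⟫_ℂ = 0 := hgO n _ ⟨m - q, hrR, rfl⟩
        have h2 : ⟪(A ^ n) (m - q), (A ^ n) (A h)⟫_ℂ = 0 := by
          rw [hinnerPow, ← inner_conj_symm,
            (Submodule.mem_orthogonal _ _).1 hrO (A h) ⟨h, hh, rfl⟩, map_zero]
        have h3 : (A ^ n) (m - q) = 0 := by
          rw [← inner_self_eq_zero (𝕜 := ℂ)]
          have : (A ^ n) (m - q) = g - (A ^ n) (A h) := by rw [hsplit]; abel
          rw [this, inner_sub_right]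
          rw [← this, h1, h2, sub_zero]
        refine ⟨h, hh, ?_⟩
        rw [pow_succ]
        simp only [ContinuousLinearMap.coe_coe, ContinuousLinearMap.mul_apply]
        rw [hsplit, h3, add_zero]
    have : g ∈ (⨅ j : ℕ, Submodule.map ((A ^ j : H →L[ℂ] H) : H →ₗ[ℂ] H) (⊤ : Submodule ℂ H)) := by
      rw [Submodule.mem_iInf]
      exact fun n => Submodule.map_mono le_top (hg n)
    rw [hpure] at this
    exact this
  -- part 2
  have hSM : (⨆ j : ℕ, Submodule.map ((A ^ j : H →L[ℂ] H) : H →ₗ[ℂ] H) R) ≤ M :=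
    iSup_le fun j => by
      rintro x ⟨x', hx', rfl⟩; exact hpowM j x' (hRM x' hx')
  have hScM : (⨆ j : ℕ, Submodule.map ((A ^ j : H →L[ℂ] H) : H →ₗ[ℂ] H) R).topologicalClosure ≤ M :=
    Submodule.topologicalClosure_minimal _ hSM hMc
  have part2 : M = (⨆ j : ℕ, Submodule.map ((A ^ j : H →L[ℂ] H) : H →ₗ[ℂ] H) R).topologicalClosure := by
    refine le_antisymm ?_ hScM
    intro f hf
    set Sc := (⨆ j : ℕ, Submodule.map ((A ^ j : H →L[ℂ] H) : H →ₗ[ℂ] H) R).topologicalClosure with hSc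
    haveI : CompleteSpace Sc :=
      (Submodule.isClosed_topologicalClosure _).completeSpace_coe
    set p : H := (Submodule.orthogonalProjectionOnto Sc f : H) with hp
    have hpSc : p ∈ Sc := (Submodule.orthogonalProjectionOnto Sc f).2
    have hgO : f - p ∈ Scᗮ := Submodule.sub_starProjection_mem_orthogonal f
    have hg0 : f - p = 0 := by
      refine key _ (M.sub_mem hf (hScM hpSc)) ?_
      intro j u hu
      exact (Submodule.mem_orthogonal _ _).1 hgO u
        ((Submodule.le_topologicalClosure _) (Submodule.mem_iSup_of_mem j hu))
    have : f = p := by rwa [sub_eq_zero] at hg0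
    rw [this]
    exact hpSc
  refine ⟨part1, part2, ?_⟩
  -- part 3: uniqueness
  intro R' hR'c hw hMR'
  set T := (⨆ j : ℕ, Submodule.map ((A ^ j : H →L[ℂ] H) : H →ₗ[ℂ] H) R') with hT
  have hTM : ∀ j : ℕ, ∀ x ∈ Submodule.map ((A ^ j : H →L[ℂ] H) : H →ₗ[ℂ] H) R', x ∈ M := by
    intro j x hx
    rw [hMR']
    exact (Submodule.le_topologicalClosure _) (Submodule.mem_iSup_of_mem j hx)
  have hR'M : ∀ x ∈ R', x ∈ M := fun x hx => hTM 0 x ⟨x, hx, by simp⟩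
  -- R' ≤ (A M)ᗮ
  have hR'O : ∀ x ∈ R', x ∈ (Submodule.map (A : H →ₗ[ℂ] H) M)ᗮ := by
    intro x hx
    rw [Submodule.mem_orthogonal]
    rintro u ⟨m, hm, rfl⟩
    have hker : T.topologicalClosure ≤ LinearMap.ker (((innerSL ℂ x).comp A : H →L[ℂ] ℂ) : H →ₗ[ℂ] ℂ) := by
      refine Submodule.topologicalClosure_minimal _ (iSup_le fun j => ?_)
        (ContinuousLinearMap.isClosed_ker _)
      rintro u ⟨v, hv, rfl⟩
      have hAv : A ((A ^ j) v) = (A ^ (j + 1)) v := by rw [pow_succ']; rfl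
      simp only [LinearMap.mem_ker, ContinuousLinearMap.coe_comp',
        Function.comp_apply, coe_innerSL_apply]
      show ⟪x, A ((A ^ j) v)⟫_ℂ = 0
      rw [hAv]
      exact hw (j + 1) (by omega) x hx _ ⟨v, hv, rfl⟩
    have hm' : m ∈ T.topologicalClosure := by rw [← hMR']; exact hm
    have := hker hm'
    simp only [LinearMap.mem_ker, ContinuousLinearMap.coe_comp',
      Function.comp_apply] at this
    have hx0 : ⟪x, A m⟫_ℂ = 0 := this
    rw [← inner_conj_symm, ContinuousLinearMap.coe_coe, hx0, map_zero]
  have hR'R : ∀ x ∈ R', x ∈ R := by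
    intro x hx
    rw [hR]
    exact ⟨hR'M x hx, hR'O x hx⟩
  -- R ≤ R'
  have hRR' : ∀ x ∈ R, x ∈ R' := by
    intro x hx
    haveI : CompleteSpace R' := hR'c.completeSpace_coe
    set p : H := (Submodule.orthogonalProjectionOnto R' x : H) with hp
    have hpR' : p ∈ R' := (Submodule.orthogonalProjectionOnto R' x).2
    have hyR' : x - p ∈ R'ᗮ := Submodule.sub_starProjection_mem_orthogonal x
    -- x - p is orthogonal to T
    have hyT : T ≤ LinearMap.ker ((innerSL ℂ (x - p) : H →L[ℂ] ℂ) : H →ₗ[ℂ] ℂ) := by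
      refine iSup_le fun j => ?_
      rintro u ⟨v, hv, rfl⟩
      simp only [LinearMap.mem_ker, coe_innerSL_apply]
      show ⟪x - p, (A ^ j) v⟫_ℂ = 0
      rcases Nat.eq_zero_or_pos j with hj | hj
      · subst hj
        have hv' : (A ^ 0) v = v := by simp
        rw [hv', ← inner_conj_symm,
          (Submodule.mem_orthogonal _ _).1 hyR' v hv, map_zero]
      · rw [inner_sub_left]
        have hxu : ⟪x, (A ^ j) v⟫_ℂ = 0 := by
          have huAM : (A ^ j) v ∈ Submodule.map (A : H →ₗ[ℂ] H) M := by
            obtain ⟨k, rfl⟩ : ∃ k, j = k + 1 := ⟨j - 1, by omega⟩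
            refine ⟨(A ^ k) v, hpowM k v (hR'M v hv), ?_⟩
            rw [pow_succ']; rfl
          rw [← inner_conj_symm,
            (Submodule.mem_orthogonal _ _).1 (hRO x hx) _ huAM, map_zero]
        have hpu : ⟪p, (A ^ j) v⟫_ℂ = 0 := hw j hj p hpR' _ ⟨v, hv, rfl⟩
        rw [hxu, hpu, sub_zero]
    have hyTc : x - p ∈ Tᗮ := by
      rw [Submodule.mem_orthogonal']
      intro u hu
      exact hyT hu
    have hy0 : x - p = 0 := by
      have hxM : x - p ∈ T.topologicalClosure := by
        rw [← hMR']
        exact M.sub_mem (hRM x hx) (hR'M p hpR')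
      have hcl : T.topologicalClosure ≤ Tᗮᗮ :=
        Submodule.topologicalClosure_minimal _ (Submodule.le_orthogonal_orthogonal _)
          (Submodule.isClosed_orthogonal _)
      have := (Submodule.mem_orthogonal _ _).1 (hcl hxM) _ hyTc
      rwa [inner_self_eq_zero] at this
    have : x = p := by rwa [sub_eq_zero] at hy0
    rw [this]
    exact hpR'
  exact le_antisymm hR'R hRR'
end

section
/- For i = 1,2, let H_i be a complex Hilbert space, A_i a pure isometry on H_i, M_i ⊆ H_i a closed subspace invariant under A_i, and R_i = M_i ⊖ A_i(M_i) the associated wandering subspace for A_i. If Φ : H₁ → H₂ is an isometry such that Φ A₁ = A₂ Φ, then Φ(M₁) = M₂ if and only if Φ(R₁) = R₂. -/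
open scoped InnerProductSpace

/-- Wandering subspace theorem: for a pure isometry `A` and a closed invariant
subspace `M`, `M` is the closed span of the `A^j`-images of `M ⊖ A M`. -/
theorem wandering_span {H : Type*}
    [NormedAddCommGroup H] [InnerProductSpace ℂ H] [CompleteSpace H]
    (A : H →L[ℂ] H) (hA : Isometry A)
    (hp : (⨅ j : ℕ, Submodule.map ((A ^ j : H →L[ℂ] H) : H →ₗ[ℂ] H) (⊤ : Submodule ℂ H)) = ⊥)
    (M : Submodule ℂ H) (hMc : IsClosed ((M : Set H))) (hMinv : ∀ f ∈ M, A f ∈ M) :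
    (⨆ j : ℕ, Submodule.map ((A ^ j : H →L[ℂ] H) : H →ₗ[ℂ] H) (M ⊓ (Submodule.map (A : H →ₗ[ℂ] H) M)ᗮ)).topologicalClosure = M := by
  set R : Submodule ℂ H := M ⊓ (Submodule.map (A : H →ₗ[ℂ] H) M)ᗮ with hRdef
  have hAi : ∀ x y : H, ⟪A x, A y⟫_ℂ = ⟪x, y⟫_ℂ :=
    LinearIsometry.inner_map_map
      ⟨(A : H →ₗ[ℂ] H), fun x => by simpa [dist_eq_norm] using hA.dist_eq x 0⟩
  have hApow : ∀ (j : ℕ) (x y : H), ⟪(A ^ j) x, (A ^ j) y⟫_ℂ = ⟪x, y⟫_ℂ := by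
    intro j
    induction j with
    | zero => intro x y; simp
    | succ n ih =>
      intro x y
      rw [pow_succ]
      simp only [ContinuousLinearMap.mul_apply]
      rw [ih, hAi]
  have hNle : Submodule.map (A : H →ₗ[ℂ] H) M ≤ M := by
    rintro _ ⟨y, hy, rfl⟩; exact hMinv y hy
  have hAjM : ∀ j : ℕ, Submodule.map ((A ^ j : H →L[ℂ] H) : H →ₗ[ℂ] H) M ≤ M := by
    intro j
    induction j with
    | zero => rintro _ ⟨y, hy, rfl⟩; simpa using hy
    | succ n ih =>
      rintro _ ⟨y, hy, rfl⟩
      have hx : (A ^ (n + 1)) y = (A ^ n) (A y) := by rw [pow_succ]; rfl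
      rw [ContinuousLinearMap.coe_coe, hx]
      exact ih ⟨A y, hMinv y hy, rfl⟩
  have hAjR : ∀ j : ℕ, Submodule.map ((A ^ j : H →L[ℂ] H) : H →ₗ[ℂ] H) R ≤ M := fun j =>
    (Submodule.map_mono inf_le_left).trans (hAjM j)
  set K : Submodule ℂ H := (⨆ j : ℕ, Submodule.map ((A ^ j : H →L[ℂ] H) : H →ₗ[ℂ] H) R).topologicalClosure with hKdef
  have hKM : K ≤ M := Submodule.topologicalClosure_minimal _ (iSup_le hAjR) hMc
  haveI : CompleteSpace K :=
    (Submodule.isClosed_topologicalClosure _).completeSpace_coe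
  have hNc : IsClosed ((Submodule.map (A : H →ₗ[ℂ] H) M : Set H)) := by
    have : (Submodule.map (A : H →ₗ[ℂ] H) M : Set H) = A '' (M : Set H) := rfl
    rw [this]
    exact hA.isClosedEmbedding.isClosedMap _ hMc
  haveI : CompleteSpace (Submodule.map (A : H →ₗ[ℂ] H) M) := hNc.completeSpace_coe
  refine le_antisymm hKM ?_
  intro f hf
  set g : H := f - (Submodule.orthogonalProjectionOnto K f : H) with hgdef
  have hgK : g ∈ Kᗮ := Submodule.sub_starProjection_mem_orthogonal (K := K) f
  have hgM : g ∈ M := M.sub_mem hf (hKM (Submodule.orthogonalProjectionOnto K f).2)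
  have key : ∀ j : ℕ, g ∈ Submodule.map ((A ^ j : H →L[ℂ] H) : H →ₗ[ℂ] H) M := by
    intro j
    induction j with
    | zero => exact ⟨g, hgM, by simp⟩
    | succ n ih =>
      obtain ⟨m, hm, hgm⟩ := ih
      set m₁ : H := (Submodule.orthogonalProjectionOnto (Submodule.map (A : H →ₗ[ℂ] H) M) m : H) with hm₁def
      have hm₁N : m₁ ∈ Submodule.map (A : H →ₗ[ℂ] H) M := (Submodule.orthogonalProjectionOnto (Submodule.map (A : H →ₗ[ℂ] H) M) m).2
      have hrR : m - m₁ ∈ R :=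
        ⟨M.sub_mem hm (hNle hm₁N), Submodule.sub_starProjection_mem_orthogonal (K := Submodule.map (A : H →ₗ[ℂ] H) M) m⟩
      have hKj : Submodule.map ((A ^ n : H →L[ℂ] H) : H →ₗ[ℂ] H) R ≤ K :=
        le_trans (le_iSup (fun j => Submodule.map ((A ^ j : H →L[ℂ] H) : H →ₗ[ℂ] H) R) n)
          (Submodule.le_topologicalClosure _)
      have h1 : ⟪(A ^ n) (m - m₁), g⟫_ℂ = 0 :=
        (Submodule.mem_orthogonal _ _).1 hgK _ (hKj ⟨m - m₁, hrR, rfl⟩)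
      have h2 : ⟪(A ^ n) (m - m₁), (A ^ n) m₁⟫_ℂ = 0 := by
        rw [hApow]
        exact (Submodule.mem_orthogonal' _ _).1 hrR.2 _ hm₁N
      have h3 : (A ^ n) (m - m₁) = 0 := by
        have hsplit : g - (A ^ n) m₁ = (A ^ n) (m - m₁) := by
          rw [← hgm, map_sub, ContinuousLinearMap.coe_coe]
        have : ⟪(A ^ n) (m - m₁), (A ^ n) (m - m₁)⟫_ℂ = 0 := by
          rw [← hsplit, inner_sub_right, hsplit, h1, h2, sub_zero]
        exact inner_self_eq_zero.mp this
      obtain ⟨m', hm', hmm'⟩ := hm₁N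
      refine ⟨m', hm', ?_⟩
      have hpow : (A ^ (n + 1)) m' = (A ^ n) (A m') := by rw [pow_succ]; rfl
      have h4 : (A ^ n) m₁ = (A ^ n) m := by
        have h5 : (A ^ n) m - (A ^ n) m₁ = 0 := by rw [← map_sub, h3]
        exact (sub_eq_zero.mp h5).symm
      simp only [ContinuousLinearMap.coe_coe] at hmm' hgm ⊢
      rw [hpow, hmm', h4, hgm]
  have hg0 : g = 0 := by
    have : g ∈ (⨅ j : ℕ, Submodule.map ((A ^ j : H →L[ℂ] H) : H →ₗ[ℂ] H) (⊤ : Submodule ℂ H)) :=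
      (Submodule.mem_iInf _).2 fun j => Submodule.map_mono le_top (key j)
    rw [hp] at this
    simpa using this
  have : f = (Submodule.orthogonalProjectionOnto K f : H) := by
    have := sub_eq_zero.mp hg0
    exact this
  rw [this]
  exact (Submodule.orthogonalProjectionOnto K f).2

theorem statement3 {H₁ H₂ : Type*}
    [NormedAddCommGroup H₁] [InnerProductSpace ℂ H₁] [CompleteSpace H₁]
    [NormedAddCommGroup H₂] [InnerProductSpace ℂ H₂] [CompleteSpace H₂]
    (A₁ : H₁ →L[ℂ] H₁) (A₂ : H₂ →L[ℂ] H₂) (hA₁ : Isometry A₁) (hA₂ : Isometry A₂)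
    (hp₁ : (⨅ j : ℕ, Submodule.map ((A₁ ^ j : H₁ →L[ℂ] H₁) : H₁ →ₗ[ℂ] H₁) (⊤ : Submodule ℂ H₁)) = ⊥)
    (hp₂ : (⨅ j : ℕ, Submodule.map ((A₂ ^ j : H₂ →L[ℂ] H₂) : H₂ →ₗ[ℂ] H₂) (⊤ : Submodule ℂ H₂)) = ⊥)
    (M₁ : Submodule ℂ H₁) (hM₁c : IsClosed ((M₁ : Set H₁))) (hM₁inv : ∀ f ∈ M₁, A₁ f ∈ M₁)
    (M₂ : Submodule ℂ H₂) (hM₂c : IsClosed ((M₂ : Set H₂))) (hM₂inv : ∀ f ∈ M₂, A₂ f ∈ M₂)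
    (Φ : H₁ →ₗ[ℂ] H₂) (hΦ : Isometry Φ) (hcomm : ∀ x, Φ (A₁ x) = A₂ (Φ x)) :
    Submodule.map Φ M₁ = M₂ ↔
      Submodule.map Φ (M₁ ⊓ (Submodule.map (A₁ : H₁ →ₗ[ℂ] H₁) M₁)ᗮ) = M₂ ⊓ (Submodule.map (A₂ : H₂ →ₗ[ℂ] H₂) M₂)ᗮ := by
  have hΦi : ∀ x y : H₁, ⟪Φ x, Φ y⟫_ℂ = ⟪x, y⟫_ℂ :=
    LinearIsometry.inner_map_map
      ⟨Φ, fun x => by simpa [dist_eq_norm] using hΦ.dist_eq x 0⟩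
  constructor
  · -- forward
    intro h
    apply le_antisymm
    · rintro _ ⟨x, ⟨hxM, hxO⟩, rfl⟩
      refine ⟨h ▸ ⟨x, hxM, rfl⟩, ?_⟩
      refine (Submodule.mem_orthogonal _ _).2 ?_
      rintro _ ⟨w, hw, rfl⟩
      have hw' : w ∈ Submodule.map Φ M₁ := h.symm ▸ hw
      obtain ⟨z, hz, rfl⟩ := hw'
      rw [ContinuousLinearMap.coe_coe, ← hcomm, hΦi]
      exact (Submodule.mem_orthogonal _ _).1 hxO _ ⟨z, hz, rfl⟩
    · rintro y ⟨hyM, hyO⟩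
      have hy' : y ∈ Submodule.map Φ M₁ := h.symm ▸ hyM
      obtain ⟨x, hxM, rfl⟩ := hy'
      have hNc : IsClosed ((Submodule.map (A₁ : H₁ →ₗ[ℂ] H₁) M₁ : Set H₁)) := by
        have : (Submodule.map (A₁ : H₁ →ₗ[ℂ] H₁) M₁ : Set H₁) = A₁ '' (M₁ : Set H₁) := rfl
        rw [this]
        exact hA₁.isClosedEmbedding.isClosedMap _ hM₁c
      haveI : CompleteSpace (Submodule.map (A₁ : H₁ →ₗ[ℂ] H₁) M₁) := hNc.completeSpace_coe
      set x₁ : H₁ := (Submodule.orthogonalProjectionOnto (Submodule.map (A₁ : H₁ →ₗ[ℂ] H₁) M₁) x : H₁) with hx₁def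
      have hx₁N : x₁ ∈ Submodule.map (A₁ : H₁ →ₗ[ℂ] H₁) M₁ :=
        (Submodule.orthogonalProjectionOnto (Submodule.map (A₁ : H₁ →ₗ[ℂ] H₁) M₁) x).2
      have hx₂O : x - x₁ ∈ (Submodule.map (A₁ : H₁ →ₗ[ℂ] H₁) M₁)ᗮ :=
        Submodule.sub_starProjection_mem_orthogonal (K := Submodule.map (A₁ : H₁ →ₗ[ℂ] H₁) M₁) x
      have hx₁M : x₁ ∈ M₁ := by
        obtain ⟨v, hv, hvx⟩ := hx₁N; rw [← hvx]; exact hM₁inv v hv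
      have hx₂M : x - x₁ ∈ M₁ := M₁.sub_mem hxM hx₁M
      -- Φ x₁ ∈ map A₂ M₂
      have hΦx₁ : Φ x₁ ∈ Submodule.map (A₂ : H₂ →ₗ[ℂ] H₂) M₂ := by
        obtain ⟨v, hv, hvx⟩ := hx₁N
        refine ⟨Φ v, h ▸ ⟨v, hv, rfl⟩, ?_⟩
        rw [ContinuousLinearMap.coe_coe] at hvx; rw [ContinuousLinearMap.coe_coe, ← hcomm, hvx]
      -- Φ (x - x₁) ⊥ map A₂ M₂
      have hΦx₂ : Φ (x - x₁) ∈ (Submodule.map (A₂ : H₂ →ₗ[ℂ] H₂) M₂)ᗮ := by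
        refine (Submodule.mem_orthogonal _ _).2 ?_
        rintro _ ⟨w, hw, rfl⟩
        have hw' : w ∈ Submodule.map Φ M₁ := h.symm ▸ hw
        obtain ⟨z, hz, rfl⟩ := hw'
        rw [ContinuousLinearMap.coe_coe, ← hcomm, hΦi]
        exact (Submodule.mem_orthogonal _ _).1 hx₂O _ ⟨z, hz, rfl⟩
      have hΦx₁O : Φ x₁ ∈ (Submodule.map (A₂ : H₂ →ₗ[ℂ] H₂) M₂)ᗮ := by
        have : Φ x₁ = Φ x - Φ (x - x₁) := by rw [map_sub]; abel
        rw [this]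
        exact Submodule.sub_mem _ hyO hΦx₂
      have hΦx₁0 : Φ x₁ = 0 :=
        inner_self_eq_zero.mp
          ((Submodule.mem_orthogonal _ _).1 hΦx₁O _ hΦx₁)
      refine ⟨x - x₁, ⟨hx₂M, hx₂O⟩, ?_⟩
      rw [map_sub, hΦx₁0, sub_zero]
  · -- reverse
    intro h
    have hcpow : ∀ (j : ℕ) (x : H₁), Φ ((A₁ ^ j) x) = (A₂ ^ j) (Φ x) := by
      intro j
      induction j with
      | zero => intro x; simp
      | succ n ih =>
        intro x
        have e1 : (A₁ ^ (n + 1)) x = (A₁ ^ n) (A₁ x) := by rw [pow_succ]; rfl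
        have e2 : (A₂ ^ (n + 1)) (Φ x) = (A₂ ^ n) (A₂ (Φ x)) := by rw [pow_succ]; rfl
        rw [e1, e2, ih, hcomm]
    have hmap : ∀ j : ℕ, Submodule.map Φ (Submodule.map ((A₁ ^ j : H₁ →L[ℂ] H₁) : H₁ →ₗ[ℂ] H₁) (M₁ ⊓ (Submodule.map (A₁ : H₁ →ₗ[ℂ] H₁) M₁)ᗮ))
        = Submodule.map ((A₂ ^ j : H₂ →L[ℂ] H₂) : H₂ →ₗ[ℂ] H₂) (Submodule.map Φ (M₁ ⊓ (Submodule.map (A₁ : H₁ →ₗ[ℂ] H₁) M₁)ᗮ)) := by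
      intro j
      ext z
      simp only [Submodule.mem_map]
      constructor
      · rintro ⟨_, ⟨x, hx, rfl⟩, rfl⟩
        exact ⟨Φ x, ⟨x, hx, rfl⟩, (hcpow j x).symm⟩
      · rintro ⟨_, ⟨x, hx, rfl⟩, rfl⟩
        exact ⟨(A₁ ^ j) x, ⟨x, hx, rfl⟩, hcpow j x⟩
    have himg : ∀ S : Submodule ℂ H₁,
        Submodule.map Φ S.topologicalClosure = (Submodule.map Φ S).topologicalClosure := by
      intro S
      apply SetLike.coe_injective
      have h1 : (Submodule.map Φ S.topologicalClosure : Set H₂)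
          = Φ '' closure (S : Set H₁) := by
        rw [Submodule.map_coe, Submodule.topologicalClosure_coe]
      have h2 : ((Submodule.map Φ S).topologicalClosure : Set H₂)
          = closure (Φ '' (S : Set H₁)) := by
        rw [Submodule.topologicalClosure_coe, Submodule.map_coe]
      rw [h1, h2, hΦ.isClosedEmbedding.closure_image_eq]
    have e1 := wandering_span A₁ hA₁ hp₁ M₁ hM₁c hM₁inv
    have e2 := wandering_span A₂ hA₂ hp₂ M₂ hM₂c hM₂inv
    calc Submodule.map Φ M₁
        = Submodule.map Φ
          (⨆ j : ℕ, Submodule.map ((A₁ ^ j : H₁ →L[ℂ] H₁) : H₁ →ₗ[ℂ] H₁) (M₁ ⊓ (Submodule.map (A₁ : H₁ →ₗ[ℂ] H₁) M₁)ᗮ)).topologicalClosure := by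
          rw [e1]
      _ = (Submodule.map Φ
          (⨆ j : ℕ, Submodule.map ((A₁ ^ j : H₁ →L[ℂ] H₁) : H₁ →ₗ[ℂ] H₁) (M₁ ⊓ (Submodule.map (A₁ : H₁ →ₗ[ℂ] H₁) M₁)ᗮ))).topologicalClosure :=
          himg _
      _ = (⨆ j : ℕ, Submodule.map ((A₂ ^ j : H₂ →L[ℂ] H₂) : H₂ →ₗ[ℂ] H₂) (M₂ ⊓ (Submodule.map (A₂ : H₂ →ₗ[ℂ] H₂) M₂)ᗮ)).topologicalClosure := by
          rw [Submodule.map_iSup]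
          congr 1
          exact iSup_congr fun j => by rw [hmap j, h]
      _ = M₂ := e2
end

section
/- Let K be a separable complex Hilbert space and let M ⊆ H²_K be a closed subspace invariant under the unilateral shift S. Then the wandering subspace R = M ⊖ S(M) satisfies dim(R) ≤ dim(K), where dim denotes Hilbert space dimension (the cardinality of an orthonormal basis). -/
noncomputable section

open MeasureTheory Complex Submodule
open scoped InnerProductSpace ENNReal ComplexConjugate

set_option synthInstance.maxHeartbeats 1000000
set_option maxHeartbeats 1600000

namespace ShiftPaper

instance : Fact ((0:ℝ) < 1) := ⟨one_pos⟩

/-- The circle, modelled as `ℝ/ℤ`. -/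
abbrev 𝕋 : Type := UnitAddCircle

/-- The normalized Haar (Lebesgue) probability measure on the circle. -/
abbrev μT : Measure 𝕋 := AddCircle.haarAddCircle

/-- The space `L²(𝕋, E)` of square-integrable `E`-valued functions on the circle. -/
abbrev L2 (E : Type*) [NormedAddCommGroup E] := Lp E 2 μT

lemma norm_fourier (n : ℤ) (t : 𝕋) : ‖fourier n t‖ = 1 := by
  rw [fourier_apply, Circle.norm_coe]

section mulF

variable {E : Type*} [NormedAddCommGroup E] [NormedSpace ℂ E]

lemma memLp_mulF (n : ℤ) (f : L2 E) :
    MemLp (fun t => fourier n t • (f : 𝕋 → E) t) 2 μT := by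
  refine MemLp.of_le (Lp.memLp f)
    (((fourier n).continuous.aestronglyMeasurable).smul (Lp.aestronglyMeasurable f)) ?_
  refine Filter.Eventually.of_forall fun t => ?_
  rw [norm_smul, norm_fourier, one_mul]

/-- Multiplication by `fourier n` (i.e. by `λ ↦ λⁿ`) as a bounded operator on `L²(𝕋, E)`.
For `n = 1` this is the bilateral shift `U`; for general `n : ℤ` it is `Uⁿ`. -/
def mulF (n : ℤ) : L2 E →L[ℂ] L2 E :=
  LinearMap.mkContinuous
    { toFun := fun f => (memLp_mulF n f).toLp _
      map_add' := fun f g => by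
        rw [← MemLp.toLp_add (memLp_mulF n f) (memLp_mulF n g)]
        refine MemLp.toLp_congr _ _ ?_
        filter_upwards [Lp.coeFn_add f g] with t ht
        simp only [ht, Pi.add_apply, smul_add]
      map_smul' := fun c f => by
        simp only [RingHom.id_apply]
        rw [← MemLp.toLp_const_smul c (memLp_mulF n f)]
        refine MemLp.toLp_congr _ _ ?_
        filter_upwards [Lp.coeFn_smul c f] with t ht
        rw [ht]
        simp only [Pi.smul_apply]
        rw [smul_comm] }
    1
    (fun f => by
      simp only [LinearMap.coe_mk, AddHom.coe_mk, one_mul]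
      rw [Lp.norm_toLp _ (memLp_mulF n f), Lp.norm_def]
      refine le_of_eq (congrArg ENNReal.toReal ?_)
      refine eLpNorm_congr_norm_ae ?_
      refine Filter.Eventually.of_forall fun t => ?_
      rw [norm_smul, norm_fourier, one_mul])

lemma coeFn_mulF (n : ℤ) (f : L2 E) :
    (mulF n f : 𝕋 → E) =ᵐ[μT] fun t => fourier n t • (f : 𝕋 → E) t :=
  MemLp.coeFn_toLp (memLp_mulF n f)

end mulF

section HardySpace

variable (K : Type) [NormedAddCommGroup K] [InnerProductSpace ℂ K] [CompleteSpace K]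

/-- The continuous function `t ↦ fourier n t • x`. -/
def fourierSmulCM (n : ℤ) (x : K) : C(𝕋, K) :=
  ⟨fun t => fourier n t • x, (fourier n).continuous.smul continuous_const⟩

/-- The element of `L²(𝕋, K)` given by `t ↦ fourier n t • x`. -/
def expVec (n : ℤ) (x : K) : L2 K := ContinuousMap.toLp 2 μT ℂ (fourierSmulCM K n x)

lemma coeFn_expVec (n : ℤ) (x : K) :
    (expVec K n x : 𝕋 → K) =ᵐ[μT] fun t => fourier n t • x :=
  ContinuousMap.coeFn_toLp (𝕜 := ℂ) μT (fourierSmulCM K n x)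

/-- The Hardy space `H²(𝕋, K)`, as the subspace of `L²(𝕋, K)` of functions all of whose
weak Fourier coefficients of negative index vanish (equivalently, all of whose coordinate
functions with respect to an orthonormal basis of `K` lie in the scalar Hardy space `H²`). -/
def Hardy : Submodule ℂ (L2 K) :=
  ⨅ (n : ℤ) (_ : n < 0) (x : K), LinearMap.ker (innerSL ℂ (expVec K n x) : L2 K →ₗ[ℂ] ℂ)

lemma isClosed_Hardy : IsClosed ((Hardy K : Set (L2 K))) := by
  have h : (Hardy K : Set (L2 K)) = ⋂ (n : ℤ) (_ : n < 0) (x : K),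
      (LinearMap.ker (innerSL ℂ (expVec K n x) : L2 K →ₗ[ℂ] ℂ) : Set (L2 K)) := by
    simp only [Hardy, Submodule.coe_iInf]
  rw [h]
  exact isClosed_iInter fun n => isClosed_iInter fun _ => isClosed_iInter fun x =>
    (ContinuousLinearMap.isClosed_ker _)

/-- The Hardy space `H²(𝕋, K)` as a Hilbert space in its own right. -/
abbrev H2 := ↥(Hardy K)

instance : CompleteSpace (H2 K) := (isClosed_Hardy K).completeSpace_coe

end HardySpace


section Shift

variable (K : Type) [NormedAddCommGroup K] [InnerProductSpace ℂ K] [CompleteSpace K]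

lemma inner_expVec_mulF (n : ℤ) (x : K) (f : L2 K) :
    (inner ℂ (expVec K n x) (mulF 1 f) : ℂ) = inner ℂ (expVec K (n - 1) x) f := by
  rw [MeasureTheory.L2.inner_def, MeasureTheory.L2.inner_def]
  refine integral_congr_ae ?_
  filter_upwards [coeFn_mulF 1 f, coeFn_expVec K n x, coeFn_expVec K (n-1) x] with t h1 h2 h3
  rw [h1, h2, h3, inner_smul_left, inner_smul_left, inner_smul_right,
    ← fourier_neg, ← fourier_neg, ← mul_assoc, ← fourier_add]
  have h : -n + 1 = -(n - 1) := by ring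
  rw [h]

lemma mulF_mem_hardy {f : L2 K} (hf : f ∈ Hardy K) : mulF 1 f ∈ Hardy K := by
  simp only [Hardy, Submodule.mem_iInf, LinearMap.mem_ker, ContinuousLinearMap.coe_coe, innerSL_apply_apply] at hf ⊢
  intro n hn x
  rw [inner_expVec_mulF]
  exact hf (n - 1) (by omega) x

/-- The unilateral shift `S` on the Hardy space `H²(𝕋, K)`: the restriction of the
bilateral shift (multiplication by the variable) to the Hardy space. -/
def S : H2 K →L[ℂ] H2 K where
  toLinearMap := (mulF (E := K) 1).toLinearMap.restrict
    (p := Hardy K) (q := Hardy K) (fun _ hx => mulF_mem_hardy K hx)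
  cont := by
    apply Continuous.subtype_mk
    exact (mulF (E := K) 1).continuous.comp continuous_subtype_val

/-- The operator `Ŝ` on `L²(𝕋, H²(𝕋,K))`, acting pointwisely (on the values) as the
unilateral shift `S`. -/
def Shat : L2 (H2 K) →L[ℂ] L2 (H2 K) := (S K).compLpL 2 μT

lemma integral_fourier_eq_zero {m : ℤ} (hm : m ≠ 0) :
    ∫ t : 𝕋, fourier m t ∂μT = 0 := by
  have h0 : ((0:ℤ)) ≠ m := fun h => hm h.symm
  have h : (inner ℂ (fourierLp (T := 1) 2 (0:ℤ)) (fourierLp 2 m) : ℂ) = 0 :=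
    orthonormal_fourier.2 h0
  rw [MeasureTheory.L2.inner_def] at h
  rw [← h]
  refine integral_congr_ae ?_
  filter_upwards [coeFn_fourierLp 2 (0:ℤ), coeFn_fourierLp 2 m] with t h1 h2
  rw [h1, h2]
  simp [fourier_zero]

lemma const_mem_hardy (x : K) : expVec K 0 x ∈ Hardy K := by
  simp only [Hardy, Submodule.mem_iInf, LinearMap.mem_ker, ContinuousLinearMap.coe_coe, innerSL_apply_apply]
  intro n hn y
  rw [MeasureTheory.L2.inner_def]
  have h : ∀ᵐ t ∂μT, (inner ℂ ((expVec K n y : 𝕋 → K) t) ((expVec K 0 x : 𝕋 → K) t) : ℂ)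
      = fourier (-n) t * (inner ℂ y x : ℂ) := by
    filter_upwards [coeFn_expVec K n y, coeFn_expVec K 0 x] with t h1 h2
    rw [h1, h2, inner_smul_left, inner_smul_right, ← fourier_neg, fourier_zero, one_mul]
  rw [integral_congr_ae h, integral_mul_const,
    integral_fourier_eq_zero (by omega), zero_mul]

/-- The linear embedding of `K` into `H²(𝕋,K)` as constant functions. -/
def constL : K →ₗ[ℂ] H2 K where
  toFun x := ⟨expVec K 0 x, const_mem_hardy K x⟩
  map_add' x y := by
    apply Subtype.ext
    simp only [Submodule.coe_add]
    unfold expVec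
    rw [← map_add]
    congr 1
    ext t
    simp [fourierSmulCM, smul_add]
  map_smul' c x := by
    apply Subtype.ext
    simp only [RingHom.id_apply, SetLike.val_smul]
    unfold expVec
    rw [← _root_.map_smul]
    congr 1
    ext t
    simp [fourierSmulCM]

end Shift


section RangeFunctions

variable {F : Type*} [NormedAddCommGroup F] [InnerProductSpace ℂ F] [CompleteSpace F]

/-- The orthogonal projection onto a closed subspace, as a plain function (defined to be `0`
if the subspace is not closed). -/
def projTo (N : Submodule ℂ F) (x : F) : F :=
  letI := Classical.dec (IsClosed ((N : Set F)))
  if h : IsClosed ((N : Set F)) then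
    haveI : CompleteSpace N := h.completeSpace_coe
    (orthogonalProjection N x : F)
  else 0

/-- A measurable range function in `F`: a map `J` from `𝕋` to closed subspaces of `F` such
that `t ↦ ⟪P_{J(t)} x, y⟫` is measurable for every `x, y ∈ F`. -/
def IsMeasRange (J : 𝕋 → Submodule ℂ F) : Prop :=
  (∀ t, IsClosed ((J t : Set F))) ∧
  ∀ x y : F, Measurable fun t => (inner ℂ (projTo (J t) x) y : ℂ)

/-- The set of `f ∈ L²(𝕋, E)` such that `f(t) ∈ J(t)` for a.e. `t ∈ 𝕋`. -/
def rangeSet {E : Type*} [NormedAddCommGroup E] [NormedSpace ℂ E]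
    (J : 𝕋 → Submodule ℂ E) : Set (L2 E) :=
  {f | ∀ᵐ t ∂μT, (f : 𝕋 → E) t ∈ J t}

end RangeFunctions

section OperatorNotions

variable {E : Type*} [NormedAddCommGroup E] [NormedSpace ℂ E]

/-- A subspace `M` is invariant under the bounded operator `A` if `A(M) ⊆ M`. -/
def InvariantUnder (A : E →L[ℂ] E) (M : Submodule ℂ E) : Prop :=
  ∀ f ∈ M, A f ∈ M

/-- Two bounded operators commute. -/
def CommutesWith (A B : E →L[ℂ] E) : Prop := ∀ f, A (B f) = B (A f)

variable {F : Type*} [NormedAddCommGroup F] [InnerProductSpace ℂ F]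

/-- A subspace `M` is reducing for `A` if both `M` and `M^⊥` are invariant under `A`. -/
def Reducing (A : F →L[ℂ] F) (M : Submodule ℂ F) : Prop :=
  InvariantUnder A M ∧ InvariantUnder A Mᗮ

/-- `Φ` is a partial isometry with initial space `W`: it is isometric on `W` and vanishes
on `W^⊥`. -/
def IsPartialIsometryOn (Φ : F →L[ℂ] F) (W : Submodule ℂ F) : Prop :=
  (∀ f ∈ W, ‖Φ f‖ = ‖f‖) ∧ ∀ f ∈ Wᗮ, Φ f = 0

end OperatorNotions

section FullHardy

variable (K : Type) [NormedAddCommGroup K] [InnerProductSpace ℂ K] [CompleteSpace K]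

/-- For a subspace `N ⊆ K`, the subspace `H²_N` of `H²_K`: those elements of the Hardy space
taking values in `N` almost everywhere. -/
def hardyIn (N : Submodule ℂ K) : Submodule ℂ (H2 K) where
  carrier := {g | ∀ᵐ z ∂μT, ((g : L2 K) : 𝕋 → K) z ∈ N}
  zero_mem' := by
    have h0 : ((0 : H2 K) : L2 K) = 0 := rfl
    rw [Set.mem_setOf_eq, h0]
    filter_upwards [Lp.coeFn_zero K 2 μT] with z hz
    rw [hz]
    exact N.zero_mem
  add_mem' := by
    intro a b ha hb
    have h0 : ((a + b : H2 K) : L2 K) = (a : L2 K) + (b : L2 K) := rfl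
    rw [Set.mem_setOf_eq, h0]
    filter_upwards [ha, hb, Lp.coeFn_add (a : L2 K) (b : L2 K)] with z ha' hb' hadd
    rw [hadd]
    exact N.add_mem ha' hb'
  smul_mem' := by
    intro c a ha
    have h0 : ((c • a : H2 K) : L2 K) = c • (a : L2 K) := rfl
    rw [Set.mem_setOf_eq, h0]
    filter_upwards [ha, Lp.coeFn_smul c (a : L2 K)] with z ha' hsmul
    rw [hsmul]
    exact N.smul_mem c ha'

/-- The set of `f ∈ L²(𝕋, H²_K)` with `f(t) ∈ H²_{J(t)}` for a.e. `t`. If `J` is a measurable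
range function in `K`, this is the full-Hardy subspace with base `J`. -/
def fullHardySet (J : 𝕋 → Submodule ℂ K) : Set (L2 (H2 K)) :=
  {f | ∀ᵐ t ∂μT, (f : 𝕋 → H2 K) t ∈ hardyIn K (J t)}

/-- A subspace `W ⊆ L²(𝕋, H²_K)` is full-Hardy if it is of the form
`{f : f(t) ∈ H²_{J(t)} a.e.}` for some measurable range function `J` in `K`. -/
def IsFullHardy (W : Submodule ℂ (L2 (H2 K))) : Prop :=
  ∃ J : 𝕋 → Submodule ℂ K, IsMeasRange J ∧ (W : Set (L2 (H2 K))) = fullHardySet K J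

end FullHardy

section Dimension

open scoped Classical in
/-- The Hilbert-space dimension of a subspace, as an element of `ℕ∞` (in a separable ambient
space this is the cardinality of any orthonormal basis). -/
def dimSub {F : Type*} [NormedAddCommGroup F] [InnerProductSpace ℂ F]
    (N : Submodule ℂ F) : ℕ∞ :=
  if FiniteDimensional ℂ ↥N then (Module.finrank ℂ ↥N : ℕ∞) else ⊤

end Dimension

section ScalarCase

/-- Evaluation of an element of the scalar Hardy space (via its chosen representative). -/
def ev (g : H2 ℂ) (z : 𝕋) : ℂ := ((g : L2 ℂ) : 𝕋 → ℂ) z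

/-- Iterated evaluation of an element of `L²(𝕋, H²)`. -/
def ev2 (f : L2 (H2 ℂ)) (t z : 𝕋) : ℂ := ev ((f : 𝕋 → H2 ℂ) t) z

/-- A function `h ∈ H²` is inner if `|h(z)| = 1` for a.e. `z ∈ 𝕋`. -/
def IsInnerFn (g : H2 ℂ) : Prop := ∀ᵐ z ∂μT, ‖ev g z‖ = 1

lemma ev_zero : ∀ᵐ z ∂μT, ev (0 : H2 ℂ) z = 0 := by
  have h0 : ((0 : H2 ℂ) : L2 ℂ) = 0 := rfl
  unfold ev
  rw [h0]
  filter_upwards [Lp.coeFn_zero ℂ 2 μT] with z hz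
  rw [hz]
  rfl

lemma ev_add (u v : H2 ℂ) : ∀ᵐ z ∂μT, ev (u + v) z = ev u z + ev v z := by
  have h0 : ((u + v : H2 ℂ) : L2 ℂ) = (u : L2 ℂ) + (v : L2 ℂ) := rfl
  unfold ev
  rw [h0]
  filter_upwards [Lp.coeFn_add (u : L2 ℂ) (v : L2 ℂ)] with z hz
  rw [hz]
  rfl

lemma ev_smul (c : ℂ) (u : H2 ℂ) : ∀ᵐ z ∂μT, ev (c • u) z = c * ev u z := by
  have h0 : ((c • u : H2 ℂ) : L2 ℂ) = c • (u : L2 ℂ) := rfl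
  unfold ev
  rw [h0]
  filter_upwards [Lp.coeFn_smul c (u : L2 ℂ)] with z hz
  rw [hz]
  rfl

/-- For `w ∈ H²`, the subspace `w·H² = {w·k : k ∈ H²}` of `H²` (membership described via
a.e. pointwise multiplication of representatives). -/
def mulSet (w : H2 ℂ) : Submodule ℂ (H2 ℂ) where
  carrier := {u | ∃ k : H2 ℂ, ∀ᵐ z ∂μT, ev u z = ev w z * ev k z}
  zero_mem' := by
    refine ⟨0, ?_⟩
    filter_upwards [ev_zero] with z hz
    rw [hz, mul_zero]
  add_mem' := by
    rintro u v ⟨k₁, h₁⟩ ⟨k₂, h₂⟩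
    refine ⟨k₁ + k₂, ?_⟩
    filter_upwards [h₁, h₂, ev_add u v, ev_add k₁ k₂] with z e1 e2 e3 e4
    rw [e3, e1, e2, e4, mul_add]
  smul_mem' := by
    rintro c u ⟨k, h⟩
    refine ⟨c • k, ?_⟩
    filter_upwards [h, ev_smul c u, ev_smul c k] with z e1 e2 e3
    rw [e2, e1, e3]
    ring

/-- The set `φ·L²(𝕋, H²) = {φ g : g ∈ L²(𝕋,H²)}`, where `(φ g)(t)(z) = φ(t)(z)·g(t)(z)`. -/
def timesSet (φ : L2 (H2 ℂ)) : Set (L2 (H2 ℂ)) :=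
  {h | ∃ g : L2 (H2 ℂ), ∀ᵐ t ∂μT, ∀ᵐ z ∂μT, ev2 h t z = ev2 φ t z * ev2 g t z}

end ScalarCase

section WanderingAux

lemma mulF_mulF {E : Type*} [NormedAddCommGroup E] [NormedSpace ℂ E] (a b : ℤ) (f : L2 E) :
    mulF a (mulF b f) = mulF (a + b) f := by
  apply Lp.ext
  filter_upwards [coeFn_mulF a (mulF b f), coeFn_mulF b f, coeFn_mulF (a + b) f]
    with t h1 h2 h3
  rw [h1, h2, h3, smul_smul, ← fourier_add]

variable (K : Type) [NormedAddCommGroup K] [InnerProductSpace ℂ K] [CompleteSpace K]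

lemma coe_S_apply (f : H2 K) : ((S K f : H2 K) : L2 K) = mulF 1 (f : L2 K) := rfl

lemma exists_shift (M : Submodule ℂ (H2 K)) (hMinv : ∀ f ∈ M, S K f ∈ M) (n : ℕ) :
    ∀ f : H2 K, f ∈ M → ∃ h : H2 K, h ∈ Submodule.map (S K : H2 K →ₗ[ℂ] H2 K) M ∧
      (h : L2 K) = mulF ((n : ℤ) + 1) (f : L2 K) := by
  induction n with
  | zero =>
    intro f hf
    refine ⟨S K f, ⟨f, hf, rfl⟩, ?_⟩
    rw [coe_S_apply]
    norm_num
  | succ n ih =>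
    intro f hf
    obtain ⟨h, hmem, heq⟩ := ih f hf
    have hM : h ∈ M := by
      obtain ⟨g, hg, rfl⟩ := hmem
      exact hMinv g hg
    refine ⟨S K h, ⟨h, hM, rfl⟩, ?_⟩
    rw [coe_S_apply, heq, mulF_mulF]
    congr 1
    push_cast
    ring_nf

variable {K}

lemma integral_fourier_inner_eq_zero (M : Submodule ℂ (H2 K)) (hMinv : ∀ f ∈ M, S K f ∈ M)
    (f g : H2 K) (hf : f ∈ M ⊓ (Submodule.map (S K : H2 K →ₗ[ℂ] H2 K) M)ᗮ)
    (hg : g ∈ M ⊓ (Submodule.map (S K : H2 K →ₗ[ℂ] H2 K) M)ᗮ) (n : ℤ) (hn : n ≠ 0) :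
    ∫ t, (fourier n t : ℂ) *
      (inner ℂ (((f : L2 K) : 𝕋 → K) t) (((g : L2 K) : 𝕋 → K) t) : ℂ) ∂μT = 0 := by
  obtain ⟨hfM, hfO⟩ := Submodule.mem_inf.mp hf
  obtain ⟨hgM, hgO⟩ := Submodule.mem_inf.mp hg
  rcases lt_or_gt_of_ne hn with hneg | hpos
  · -- n < 0 : shift f
    obtain ⟨m, hm⟩ : ∃ m : ℕ, -n = (m : ℤ) + 1 := ⟨(-n - 1).toNat, by omega⟩
    obtain ⟨h, hmem, heq⟩ := exists_shift K M hMinv m f hfM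
    have heq' : (h : L2 K) = mulF (-n) (f : L2 K) := by rw [heq, ← hm]
    have h0 : (inner ℂ (h : L2 K) (g : L2 K) : ℂ) = 0 := by
      have h1 := (Submodule.mem_orthogonal _ g).mp hgO h hmem
      rwa [Submodule.coe_inner] at h1
    have key : ∫ t, (fourier n t : ℂ) *
        (inner ℂ (((f : L2 K) : 𝕋 → K) t) (((g : L2 K) : 𝕋 → K) t) : ℂ) ∂μT
        = inner ℂ (h : L2 K) (g : L2 K) := by
      rw [MeasureTheory.L2.inner_def]
      refine integral_congr_ae ?_
      have hcoe : ((h : L2 K) : 𝕋 → K) =ᵐ[μT]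
          fun t => fourier (-n) t • ((f : L2 K) : 𝕋 → K) t := by
        rw [heq']
        exact coeFn_mulF (-n) (f : L2 K)
      filter_upwards [hcoe] with t ht
      rw [ht, inner_smul_left, fourier_neg, starRingEnd_self_apply]
    rw [key, h0]
  · -- n > 0 : shift g
    obtain ⟨m, hm⟩ : ∃ m : ℕ, n = (m : ℤ) + 1 := ⟨(n - 1).toNat, by omega⟩
    obtain ⟨h, hmem, heq⟩ := exists_shift K M hMinv m g hgM
    have heq' : (h : L2 K) = mulF n (g : L2 K) := by rw [heq, ← hm]
    have h0 : (inner ℂ (f : L2 K) (h : L2 K) : ℂ) = 0 := by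
      have h1 := (Submodule.mem_orthogonal' _ f).mp hfO h hmem
      rwa [Submodule.coe_inner] at h1
    have key : ∫ t, (fourier n t : ℂ) *
        (inner ℂ (((f : L2 K) : 𝕋 → K) t) (((g : L2 K) : 𝕋 → K) t) : ℂ) ∂μT
        = inner ℂ (f : L2 K) (h : L2 K) := by
      rw [MeasureTheory.L2.inner_def]
      refine integral_congr_ae ?_
      have hcoe : ((h : L2 K) : 𝕋 → K) =ᵐ[μT]
          fun t => fourier n t • ((g : L2 K) : 𝕋 → K) t := by
        rw [heq']
        exact coeFn_mulF n (g : L2 K)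
      filter_upwards [hcoe] with t ht
      rw [ht, inner_smul_right]
    rw [key, h0]

/-- Testing an integrable function against all continuous functions. -/
lemma ae_eq_zero_of_forall_integral_continuous {v : 𝕋 → ℂ} (hvi : Integrable v μT)
    (hCont : ∀ φ : C(𝕋, ℂ), ∫ t, φ t * v t ∂μT = 0) : v =ᵐ[μT] 0 := by
  have int_mul : ∀ φ : C(𝕋, ℂ), Integrable (fun t => φ t * v t) μT := fun φ =>
    hvi.bdd_mul φ.continuous.aestronglyMeasurable
      (Filter.Eventually.of_forall fun t => φ.norm_coe_le_norm t)
  refine ae_eq_zero_of_forall_setIntegral_isClosed_eq_zero hvi ?_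
  intro s hs
  rcases s.eq_empty_or_nonempty with rfl | hne
  · simp
  · set d : 𝕋 → ℝ := fun t => Metric.infDist t s with hd
    set g : ℕ → 𝕋 → ℂ := fun k t => ((max 0 (1 - (k : ℝ) * d t) : ℝ) : ℂ) with hg
    have hgc : ∀ k, Continuous (g k) := fun k =>
      Complex.continuous_ofReal.comp
        (continuous_const.max (continuous_const.sub
          (continuous_const.mul (Metric.continuous_infDist_pt s))))
    have hg1 : ∀ k t, ‖g k t‖ ≤ 1 := by
      intro k t
      have hd0 : 0 ≤ d t := Metric.infDist_nonneg
      have hle : max 0 (1 - (k : ℝ) * d t) ≤ 1 :=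
        max_le zero_le_one (by nlinarith [Nat.cast_nonneg (α := ℝ) k])
      have hge : (0 : ℝ) ≤ max 0 (1 - (k : ℝ) * d t) := le_max_left _ _
      have hnorm : ‖g k t‖ = |max 0 (1 - (k : ℝ) * d t)| := by
        simp only [hg, Complex.norm_real, Real.norm_eq_abs]
      rw [hnorm, _root_.abs_of_nonneg hge]
      exact hle
    have hzero : ∀ k, ∫ t, g k t * v t ∂μT = 0 := fun k => hCont ⟨g k, hgc k⟩
    have hlim : ∀ t, Filter.Tendsto (fun k => g k t * v t) Filter.atTop
        (nhds (Set.indicator s (fun _ => (1 : ℂ)) t * v t)) := by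
      intro t
      by_cases ht : t ∈ s
      · have hgt : ∀ k, g k t = 1 := by
          intro k
          have : d t = 0 := Metric.infDist_zero_of_mem ht
          simp [hg, this]
        simp only [Set.indicator_of_mem ht]
        simp only [hgt, one_mul]
        exact tendsto_const_nhds
      · have hdpos : 0 < d t := (hs.notMem_iff_infDist_pos hne).mp ht
        have hev : (fun k => g k t * v t) =ᶠ[Filter.atTop] fun _ => (0 : ℂ) := by
          filter_upwards [Filter.eventually_ge_atTop ⌈1 / d t⌉₊] with k hk
          have h1 : 1 / d t ≤ (k : ℝ) := le_trans (Nat.le_ceil _) (Nat.cast_le.mpr hk)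
          have h2 : (1 : ℝ) ≤ (k : ℝ) * d t := by
            rw [div_le_iff₀ hdpos] at h1
            linarith
          have : g k t = 0 := by
            rw [hg]
            simp only [Complex.ofReal_eq_zero]
            exact max_eq_left (by linarith)
          rw [this, zero_mul]
        simp only [Set.indicator_of_notMem ht, zero_mul]
        exact Filter.Tendsto.congr' hev.symm tendsto_const_nhds
    have hDCT := MeasureTheory.tendsto_integral_of_dominated_convergence
      (F := fun k t => g k t * v t) (bound := fun t => ‖v t‖)
      (fun k => (int_mul ⟨g k, hgc k⟩).aestronglyMeasurable)
      hvi.norm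
      (fun k => Filter.Eventually.of_forall fun t => by
        rw [norm_mul]
        calc ‖g k t‖ * ‖v t‖ ≤ 1 * ‖v t‖ :=
              mul_le_mul_of_nonneg_right (hg1 k t) (norm_nonneg _)
          _ = ‖v t‖ := one_mul _)
      (Filter.Eventually.of_forall hlim)
    rw [funext hzero] at hDCT
    have hI : ∫ t, Set.indicator s (fun _ => (1 : ℂ)) t * v t ∂μT = 0 :=
      tendsto_nhds_unique hDCT tendsto_const_nhds
    have hrw : (fun t => Set.indicator s (fun _ => (1 : ℂ)) t * v t) = Set.indicator s v := by
      funext t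
      by_cases ht : t ∈ s <;> simp [ht]
    rw [hrw, MeasureTheory.integral_indicator hs.measurableSet] at hI
    exact hI

lemma ae_inner_eq_const (M : Submodule ℂ (H2 K)) (hMinv : ∀ f ∈ M, S K f ∈ M)
    (f g : H2 K) (hf : f ∈ M ⊓ (Submodule.map (S K : H2 K →ₗ[ℂ] H2 K) M)ᗮ)
    (hg : g ∈ M ⊓ (Submodule.map (S K : H2 K →ₗ[ℂ] H2 K) M)ᗮ) :
    ∀ᵐ t ∂μT, (inner ℂ (((f : L2 K) : 𝕋 → K) t) (((g : L2 K) : 𝕋 → K) t) : ℂ)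
      = inner ℂ (f : L2 K) (g : L2 K) := by
  set F : 𝕋 → K := ((f : L2 K) : 𝕋 → K) with hF
  set G : 𝕋 → K := ((g : L2 K) : 𝕋 → K) with hG
  set c : ℂ := inner ℂ (f : L2 K) (g : L2 K) with hc
  set v : 𝕋 → ℂ := fun t => (inner ℂ (F t) (G t) : ℂ) - c with hv
  have hvi : Integrable v μT :=
    (MeasureTheory.L2.integrable_inner (𝕜 := ℂ) (f : L2 K) (g : L2 K)).sub
      (integrable_const c)
  have hinner_int : Integrable (fun t => (inner ℂ (F t) (G t) : ℂ)) μT :=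
    MeasureTheory.L2.integrable_inner (𝕜 := ℂ) (f : L2 K) (g : L2 K)
  have hFour : ∀ n : ℤ, ∫ t, (fourier n t : ℂ) * v t ∂μT = 0 := by
    intro n
    have I1 : Integrable (fun t => (fourier n t : ℂ) * (inner ℂ (F t) (G t) : ℂ)) μT :=
      hinner_int.bdd_mul (c := 1) (fourier n).continuous.aestronglyMeasurable
        (Filter.Eventually.of_forall fun t => le_of_eq (norm_fourier n t))
    have I2 : Integrable (fun t => (fourier n t : ℂ) * c) μT :=
      (integrable_const c).bdd_mul (c := 1) (fourier n).continuous.aestronglyMeasurable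
        (Filter.Eventually.of_forall fun t => le_of_eq (norm_fourier n t))
    have hsplit : ∫ t, (fourier n t : ℂ) * v t ∂μT
        = (∫ t, (fourier n t : ℂ) * (inner ℂ (F t) (G t) : ℂ) ∂μT)
          - ∫ t, (fourier n t : ℂ) * c ∂μT := by
      rw [← integral_sub I1 I2]
      refine integral_congr_ae (Filter.Eventually.of_forall fun t => ?_)
      simp [hv, mul_sub]
    rw [hsplit]
    by_cases h0 : n = 0
    · subst h0
      have e1 : ∫ t, (fourier 0 t : ℂ) * (inner ℂ (F t) (G t) : ℂ) ∂μT = c := by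
        rw [hc, MeasureTheory.L2.inner_def]
        refine integral_congr_ae (Filter.Eventually.of_forall fun t => ?_)
        simp [fourier_zero, hF, hG]
      have e2 : ∫ t, (fourier 0 t : ℂ) * c ∂μT = c := by
        simp [fourier_zero]
      rw [e1, e2, sub_self]
    · have e1 := integral_fourier_inner_eq_zero M hMinv f g hf hg n h0
      have e2 : ∫ t, (fourier n t : ℂ) * c ∂μT = 0 := by
        rw [MeasureTheory.integral_mul_const, integral_fourier_eq_zero h0, zero_mul]
      rw [e1, e2, sub_self]
  have hCont : ∀ φ : C(𝕋, ℂ), ∫ t, φ t * v t ∂μT = 0 := by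
    have int_mul : ∀ φ : C(𝕋, ℂ), Integrable (fun t => φ t * v t) μT := fun φ =>
      hvi.bdd_mul φ.continuous.aestronglyMeasurable
        (Filter.Eventually.of_forall fun t => φ.norm_coe_le_norm t)
    set T : C(𝕋, ℂ) →ₗ[ℂ] ℂ :=
      { toFun := fun φ => ∫ t, φ t * v t ∂μT
        map_add' := fun φ ψ => by
          rw [← integral_add (int_mul φ) (int_mul ψ)]
          refine integral_congr_ae (Filter.Eventually.of_forall fun t => ?_)
          simp [add_mul]
        map_smul' := fun a φ => by
          simp only [RingHom.id_apply]
          rw [← MeasureTheory.integral_smul]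
          refine integral_congr_ae (Filter.Eventually.of_forall fun t => ?_)
          simp [smul_mul_assoc, mul_assoc] } with hT
    have hTc : ∀ φ : C(𝕋, ℂ), ‖T φ‖ ≤ (∫ t, ‖v t‖ ∂μT) * ‖φ‖ := by
      intro φ
      have h1 : ‖T φ‖ ≤ ∫ t, ‖φ t * v t‖ ∂μT := norm_integral_le_integral_norm _
      have h2 : ∫ t, ‖φ t * v t‖ ∂μT ≤ ∫ t, ‖φ‖ * ‖v t‖ ∂μT := by
        refine integral_mono (int_mul φ).norm (hvi.norm.const_mul _) fun t => ?_
        rw [norm_mul]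
        exact mul_le_mul_of_nonneg_right (φ.norm_coe_le_norm t) (norm_nonneg _)
      have h3 : ∫ t, ‖φ‖ * ‖v t‖ ∂μT = (∫ t, ‖v t‖ ∂μT) * ‖φ‖ := by
        rw [MeasureTheory.integral_const_mul, mul_comm]
      calc ‖T φ‖ ≤ ∫ t, ‖φ t * v t‖ ∂μT := h1
        _ ≤ ∫ t, ‖φ‖ * ‖v t‖ ∂μT := h2
        _ = (∫ t, ‖v t‖ ∂μT) * ‖φ‖ := h3
    set Tc : C(𝕋, ℂ) →L[ℂ] ℂ := LinearMap.mkContinuous T (∫ t, ‖v t‖ ∂μT) hTc with hTcdef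
    have hker : (Submodule.span ℂ (Set.range (@fourier 1))).topologicalClosure
        ≤ LinearMap.ker (Tc : C(𝕋, ℂ) →ₗ[ℂ] ℂ) := by
      refine Submodule.topologicalClosure_minimal _ ?_ ?_
      · rw [Submodule.span_le]
        rintro _ ⟨n, rfl⟩
        simp only [SetLike.mem_coe, LinearMap.mem_ker]
        exact hFour n
      · exact ContinuousLinearMap.isClosed_ker Tc
    rw [span_fourier_closure_eq_top] at hker
    intro φ
    have := hker (Submodule.mem_top (x := φ))
    exact this
  filter_upwards [ae_eq_zero_of_forall_integral_continuous hvi hCont] with t ht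
  have : (inner ℂ (F t) (G t) : ℂ) - c = 0 := ht
  linear_combination this

lemma countable_of_orthonormal {F : Type*} [NormedAddCommGroup F] [InnerProductSpace ℂ F]
    [TopologicalSpace.SeparableSpace F] {ι : Type} {v : ι → F} (hv : Orthonormal ℂ v) :
    Countable ι := by
  have hdist : ∀ i j, i ≠ j → (1 : ℝ) ≤ dist (v i) (v j) := by
    intro i j hij
    have h2 : ‖v i - v j‖ ^ 2 = 2 := by
      rw [@norm_sub_sq ℂ, hv.1 i, hv.1 j, hv.2 hij]
      norm_num
    rw [dist_eq_norm]
    nlinarith [norm_nonneg (v i - v j)]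
  refine Pairwise.countable_of_isOpen_disjoint
    (s := fun i => Metric.ball (v i) (1 / 2)) ?_ (fun i => Metric.isOpen_ball)
    (fun i => ⟨v i, Metric.mem_ball_self (by norm_num)⟩)
  intro i j hij
  refine Metric.ball_disjoint_ball ?_
  have := hdist i j hij
  linarith

end WanderingAux

section Statements

variable (K : Type) [NormedAddCommGroup K] [InnerProductSpace ℂ K] [CompleteSpace K]
  [SecondCountableTopology K]

theorem statement4 (M : Submodule ℂ (H2 K)) (hMc : IsClosed ((M : Set (H2 K))))
    (hMinv : ∀ f ∈ M, S K f ∈ M) :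
    ∀ (ι κ : Type) (_ : HilbertBasis ι ℂ ↥(M ⊓ (Submodule.map (S K : H2 K →ₗ[ℂ] H2 K) M)ᗮ))
      (_ : HilbertBasis κ ℂ K), Cardinal.mk ι ≤ Cardinal.mk κ := by
  intro ι κ bR bK
  classical
  -- The coerced orthonormal family in `L²(𝕋, K)`.
  set vL : ι → L2 K := fun i => (((bR i : ↥(M ⊓ (Submodule.map (S K : H2 K →ₗ[ℂ] H2 K) M)ᗮ)) : H2 K) : L2 K)
    with hvL
  have hmemR : ∀ i, ((bR i : ↥(M ⊓ (Submodule.map (S K : H2 K →ₗ[ℂ] H2 K) M)ᗮ)) : H2 K)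
      ∈ M ⊓ (Submodule.map (S K : H2 K →ₗ[ℂ] H2 K) M)ᗮ := fun i => (bR i).2
  have honL : Orthonormal ℂ vL := by
    rw [orthonormal_iff_ite]
    intro i j
    have := orthonormal_iff_ite.mp bR.orthonormal i j
    rw [Submodule.coe_inner, Submodule.coe_inner] at this
    exact this
  by_cases hκ : Infinite κ
  · -- infinite case: `ι` is countable since `L²(𝕋, K)` is second countable.
    haveI : Fact ((1 : ℝ≥0∞) ≤ 2) := ⟨one_le_two⟩
    haveI : Fact ((2 : ℝ≥0∞) ≠ ∞) := ⟨by norm_num⟩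
    haveI : Countable ι := countable_of_orthonormal honL
    calc Cardinal.mk ι ≤ Cardinal.aleph0 := Cardinal.mk_le_aleph0
      _ ≤ Cardinal.mk κ := Cardinal.aleph0_le_mk κ
  · haveI : Finite κ := not_infinite_iff_finite.mp hκ
    haveI : Fintype κ := Fintype.ofFinite κ
    -- `K` is finite dimensional with `finrank = card κ`.
    have hspan : Submodule.span ℂ (Set.range bK) = ⊤ := by
      have hfd : FiniteDimensional ℂ ↥(Submodule.span ℂ (Set.range bK)) :=
        FiniteDimensional.span_of_finite ℂ (Set.finite_range bK)
      have hclosed : IsClosed ((Submodule.span ℂ (Set.range bK) : Set K)) :=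
        Submodule.closed_of_finiteDimensional _
      rw [← hclosed.submodule_topologicalClosure_eq, bK.dense_span]
    have hli : LinearIndependent ℂ (fun i => (bK i : K)) := bK.orthonormal.linearIndependent
    set bKb : Module.Basis κ ℂ K := Module.Basis.mk hli (by rw [hspan]) with hbKb
    haveI : FiniteDimensional ℂ K := Module.Finite.of_basis bKb
    have hrank : Module.finrank ℂ K = Fintype.card κ := (Module.finrank_eq_card_basis bKb)
    set n := Fintype.card κ with hn
    -- there is no embedding of `Fin (n+1)` into `ι`.
    have hnoemb : ∀ _ : Fin (n + 1) ↪ ι, False := by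
      intro emb
      have hae : ∀ᵐ t ∂μT, ∀ j j' : Fin (n + 1),
          (inner ℂ ((vL (emb j) : 𝕋 → K) t) ((vL (emb j') : 𝕋 → K) t) : ℂ)
            = if j = j' then 1 else 0 := by
        rw [MeasureTheory.ae_all_iff]
        intro j
        rw [MeasureTheory.ae_all_iff]
        intro j'
        have h1 := ae_inner_eq_const M hMinv _ _ (hmemR (emb j)) (hmemR (emb j'))
        filter_upwards [h1] with t ht
        rw [ht]
        have h2 := orthonormal_iff_ite.mp honL (emb j) (emb j')
        rw [h2]
        simp [emb.injective.eq_iff]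
      have hexists : ∃ t, ∀ j j' : Fin (n + 1),
          (inner ℂ ((vL (emb j) : 𝕋 → K) t) ((vL (emb j') : 𝕋 → K) t) : ℂ)
            = if j = j' then 1 else 0 := hae.exists
      obtain ⟨t, ht⟩ := hexists
      have honK : Orthonormal ℂ (fun j : Fin (n + 1) => (vL (emb j) : 𝕋 → K) t) :=
        orthonormal_iff_ite.mpr ht
      have hcard := honK.linearIndependent.fintype_card_le_finrank
      rw [hrank, Fintype.card_fin] at hcard
      omega
    have hle : Cardinal.mk ι ≤ (n : Cardinal) := by
      by_contra hcon
      push_neg at hcon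
      have h1 : ((n + 1 : ℕ) : Cardinal) ≤ Cardinal.mk ι := by
        rw [Cardinal.nat_succ]
        exact Order.succ_le_of_lt hcon
      rw [← Cardinal.mk_fin (n + 1), Cardinal.le_def] at h1
      obtain ⟨emb⟩ := h1
      exact hnoemb emb
    have hκn : Cardinal.mk κ = (n : Cardinal) := by
      rw [Cardinal.mk_fintype]
    rw [hκn]
    exact hle

end Statements

end ShiftPaper
end
end

section
/- Let K be a separable complex Hilbert space. A closed subspace M ⊆ L²(𝕋,K) is reducing for the bilateral shift U if and only if there exists a measurable range function J in K such that M = {f ∈ L²(𝕋,K) : f(λ) ∈ J(λ) for a.e. λ ∈ 𝕋}. Identifying range functions that agree almost everywhere, this correspondence between reducing subspaces for U and measurable range functions is one-to-one and onto. Moreover, if M is the closed linear span of {U^k f : f ∈ A, k ∈ ℤ} for an at most countable set A ⊆ L²(𝕋,K), then the measurable range function associated to M satisfies J(λ) = closed linear span of {f(λ) : f ∈ A} for a.e. λ ∈ 𝕋. -/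
noncomputable section

open MeasureTheory Complex Submodule
open scoped InnerProductSpace ENNReal ComplexConjugate

set_option synthInstance.maxHeartbeats 1000000
set_option maxHeartbeats 1600000

namespace ShiftPaper

section Additions
open Filter Topology Finset InnerProductSpace


section MulFAlg
variable {E : Type*} [NormedAddCommGroup E] [NormedSpace ℂ E]

lemma mulF_mulF_s5 (m n : ℤ) (f : L2 E) : mulF m (mulF n f) = mulF (m + n) f := by
  apply Lp.ext
  filter_upwards [coeFn_mulF m (mulF n f), coeFn_mulF n f, coeFn_mulF (m + n) f] with t h1 h2 h3
  rw [h1, h2, h3, fourier_add, mul_smul]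

lemma mulF_zero_apply (f : L2 E) : mulF 0 f = f := by
  apply Lp.ext
  filter_upwards [coeFn_mulF 0 f] with t h1
  rw [h1, fourier_zero, one_smul]

end MulFAlg

section InnerMulF
variable {K : Type} [NormedAddCommGroup K] [InnerProductSpace ℂ K] [CompleteSpace K]

lemma inner_mulF_left (n : ℤ) (f g : L2 K) :
    (inner ℂ (mulF n f) g : ℂ) =
      ∫ t, fourier (-n) t * (inner ℂ ((f : 𝕋 → K) t) ((g : 𝕋 → K) t) : ℂ) ∂μT := by
  rw [MeasureTheory.L2.inner_def]
  refine integral_congr_ae ?_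
  filter_upwards [coeFn_mulF n f] with t h
  rw [h, inner_smul_left, ← fourier_neg]

lemma inner_mulF_adj (n : ℤ) (f g : L2 K) :
    (inner ℂ (mulF n f) g : ℂ) = inner ℂ f (mulF (-n) g) := by
  rw [MeasureTheory.L2.inner_def, MeasureTheory.L2.inner_def]
  refine integral_congr_ae ?_
  filter_upwards [coeFn_mulF n f, coeFn_mulF (-n) g] with t h1 h2
  rw [h1, h2, inner_smul_left, inner_smul_right, ← fourier_neg]

end InnerMulF

section FourierUniq

lemma integrable_contMul {F : 𝕋 → ℂ} (hF : Integrable F μT) (u : C(𝕋, ℂ)) :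
    Integrable (fun t => u t * F t) μT :=
  hF.bdd_mul u.continuous.aestronglyMeasurable (Filter.Eventually.of_forall fun t => u.norm_coe_le_norm t)

lemma ae_eq_zero_of_forall_integral_continuousMap {F : 𝕋 → ℂ} (hF : Integrable F μT)
    (h : ∀ u : C(𝕋, ℂ), ∫ t, u t * F t ∂μT = 0) : F =ᵐ[μT] 0 := by
  have hreal : ∀ u : C(𝕋, ℝ), ∫ t, (u t : ℂ) * F t ∂μT = 0 := fun u =>
    h ⟨fun t => (u t : ℂ), Complex.continuous_ofReal.comp u.continuous⟩
  have hset : ∀ s : Set 𝕋, MeasurableSet s → ∫ t in s, F t ∂μT = 0 := by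
    intro s hs
    set indLp : Lp ℝ 1 μT := indicatorConstLp 1 hs (measure_ne_top μT s) (1 : ℝ) with hind
    obtain ⟨q, hq⟩ : ∃ q : ℕ → C(𝕋, ℝ),
        Tendsto (fun k => (ContinuousMap.toLp (p := 1) (μ := μT) ℝ (q k))) atTop (𝓝 indLp) := by
      have hd := ContinuousMap.toLp_denseRange (E := ℝ) (p := 1) (μ := μT) ℝ ENNReal.one_ne_top
      obtain ⟨g, hg_mem, hg_t⟩ := mem_closure_iff_seq_limit.mp (hd.closure_eq ▸ Set.mem_univ indLp)
      choose qq hqe using hg_mem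
      exact ⟨qq, by simpa [funext hqe] using hg_t⟩
    have htm : TendstoInMeasure μT
        (fun k => ((ContinuousMap.toLp (p := 1) (μ := μT) ℝ (q k) : Lp ℝ 1 μT) : 𝕋 → ℝ))
        atTop (indLp : 𝕋 → ℝ) := by
      refine tendstoInMeasure_of_tendsto_eLpNorm (p := 1) one_ne_zero
        (fun k => Lp.aestronglyMeasurable _) (Lp.aestronglyMeasurable _) ?_
      exact (Lp.tendsto_Lp_iff_tendsto_eLpNorm' _ _).mp hq
    obtain ⟨ns, _, hae⟩ := htm.exists_seq_tendsto_ae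
    have hco : ∀ᵐ t ∂μT, ∀ k : ℕ,
        ((ContinuousMap.toLp (p := 1) (μ := μT) ℝ (q k) : Lp ℝ 1 μT) : 𝕋 → ℝ) t = q k t := by
      rw [MeasureTheory.ae_all_iff]
      exact fun k => ContinuousMap.coeFn_toLp μT (q k)
    have hptw : ∀ᵐ t ∂μT, Tendsto (fun j => q (ns j) t) atTop
        (𝓝 (s.indicator (fun _ => (1:ℝ)) t)) := by
      filter_upwards [hae, hco, indicatorConstLp_coeFn (p := 1) (μ := μT)
        (hs := hs) (hμs := measure_ne_top μT s) (c := (1:ℝ))] with t h1 h2 h3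
      have h1' : Tendsto (fun j => q (ns j) t) atTop (𝓝 ((indLp : 𝕋 → ℝ) t)) :=
        h1.congr (fun j => h2 (ns j))
      rwa [hind, h3] at h1'
    -- clamp to [0,1]
    set rf : ℝ → ℝ := fun x => max 0 (min 1 x) with hrf
    have hrc : Continuous rf := continuous_const.max (continuous_const.min continuous_id)
    have habs : ∀ x : ℝ, |rf x| ≤ 1 := by
      intro x
      rw [abs_le]
      constructor
      · have := le_max_left (0:ℝ) (min 1 x); linarith
      · exact max_le zero_le_one (min_le_left _ _)
    have hclamp : ∀ j, ∫ t, ((rf (q (ns j) t) : ℝ) : ℂ) * F t ∂μT = 0 := fun j =>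
      hreal (ContinuousMap.mk (fun t => rf (q (ns j) t)) (hrc.comp (q (ns j)).continuous))
    have hdct : Tendsto (fun j => ∫ t, ((rf (q (ns j) t) : ℝ) : ℂ) * F t ∂μT) atTop
        (𝓝 (∫ t, ((s.indicator (fun _ => (1:ℝ)) t : ℝ) : ℂ) * F t ∂μT)) := by
      refine tendsto_integral_of_dominated_convergence (fun t => ‖F t‖) ?_ hF.norm ?_ ?_
      · exact fun j => ((Complex.continuous_ofReal.comp
          (hrc.comp (q (ns j)).continuous)).aestronglyMeasurable).mul hF.1
      · refine fun j => Filter.Eventually.of_forall fun t => ?_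
        rw [norm_mul]
        have h1 : ‖((rf (q (ns j) t) : ℝ) : ℂ)‖ ≤ 1 := by
          rw [Complex.norm_real]; exact habs _
        nlinarith [norm_nonneg (F t), norm_nonneg ((rf (q (ns j) t) : ℝ) : ℂ)]
      · filter_upwards [hptw] with t ht
        have hcont : Tendsto (fun j => rf (q (ns j) t)) atTop
            (𝓝 (rf (s.indicator (fun _ => (1:ℝ)) t))) := (hrc.tendsto _).comp ht
        have hval : rf (s.indicator (fun _ => (1:ℝ)) t) = s.indicator (fun _ => (1:ℝ)) t := by
          by_cases hts : t ∈ s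
          · rw [Set.indicator_of_mem hts]; norm_num [hrf]
          · rw [Set.indicator_of_notMem hts]; norm_num [hrf]
        rw [hval] at hcont
        exact ((Complex.continuous_ofReal.tendsto _).comp hcont).mul tendsto_const_nhds
    have hzero : ∫ t, ((s.indicator (fun _ => (1:ℝ)) t : ℝ) : ℂ) * F t ∂μT = 0 :=
      tendsto_nhds_unique hdct (by simpa [hclamp] using (tendsto_const_nhds :
        Tendsto (fun _ : ℕ => (0:ℂ)) atTop (𝓝 0)))
    rw [← hzero, ← integral_indicator hs]
    refine integral_congr_ae (Filter.Eventually.of_forall fun t => ?_)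
    by_cases hts : t ∈ s <;> simp [hts]
  exact ae_eq_zero_of_forall_setIntegral_eq_of_sigmaFinite
    (fun s hs _ => hF.integrableOn) (fun s hs _ => hset s hs)

lemma ae_eq_zero_of_forall_fourier {F : 𝕋 → ℂ} (hF : Integrable F μT)
    (h : ∀ n : ℤ, ∫ t, fourier n t * F t ∂μT = 0) : F =ᵐ[μT] 0 := by
  refine ae_eq_zero_of_forall_integral_continuousMap hF ?_
  have hspan : ∀ u ∈ span ℂ (Set.range (@fourier 1)), ∫ t, u t * F t ∂μT = 0 := by
    intro u hu
    induction hu using Submodule.span_induction with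
    | mem x hx => obtain ⟨n, rfl⟩ := hx; exact h n
    | zero => simp
    | add x y hx hy ihx ihy =>
        have he : (fun t => (x + y) t * F t) = fun t => x t * F t + y t * F t := by
          funext t; simp [add_mul]
        rw [he, integral_add (integrable_contMul hF x) (integrable_contMul hF y), ihx, ihy,
          add_zero]
    | smul c x hx ih =>
        have he : (fun t => (c • x) t * F t) = fun t => c * (x t * F t) := by
          funext t; simp [mul_assoc]
        rw [he, integral_const_mul, ih, mul_zero]
  intro u
  have hu : u ∈ closure (span ℂ (Set.range (@fourier 1)) : Set C(𝕋, ℂ)) := by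
    have : u ∈ (span ℂ (Set.range (@fourier 1))).topologicalClosure := by
      rw [span_fourier_closure_eq_top]; trivial
    exact this
  obtain ⟨g, hg_mem, hg_t⟩ := mem_closure_iff_seq_limit.mp hu
  have hbound : ∀ k, ‖∫ t, u t * F t ∂μT‖ ≤ ‖u - g k‖ * ∫ t, ‖F t‖ ∂μT := by
    intro k
    have h0 : ∫ t, g k t * F t ∂μT = 0 := hspan _ (hg_mem k)
    have hsub : ∫ t, u t * F t ∂μT = ∫ t, (u t - g k t) * F t ∂μT := by
      have he : (fun t => (u t - g k t) * F t) = fun t => u t * F t - g k t * F t := by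
        funext t; ring
      rw [he, integral_sub (integrable_contMul hF u) (integrable_contMul hF (g k)), h0, sub_zero]
    rw [hsub]
    calc ‖∫ t, (u t - g k t) * F t ∂μT‖ ≤ ∫ t, ‖(u t - g k t) * F t‖ ∂μT :=
          norm_integral_le_integral_norm _
      _ ≤ ∫ t, ‖u - g k‖ * ‖F t‖ ∂μT := by
          refine integral_mono ?_ (hF.norm.const_mul _) fun t => ?_
          · have : (fun t => (u t - g k t) * F t) = fun t => (u - g k) t * F t := by
              funext t; simp
            exact (this ▸ (integrable_contMul hF (u - g k))).norm
          · rw [norm_mul]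
            have : ‖u t - g k t‖ ≤ ‖u - g k‖ := by
              have := (u - g k).norm_coe_le_norm t
              simpa using this
            exact mul_le_mul_of_nonneg_right this (norm_nonneg _)
      _ = ‖u - g k‖ * ∫ t, ‖F t‖ ∂μT := integral_const_mul _ _
  have hlim : Tendsto (fun k => ‖u - g k‖ * ∫ t, ‖F t‖ ∂μT) atTop (𝓝 (0 * ∫ t, ‖F t‖ ∂μT)) := by
    refine Tendsto.mul_const _ ?_
    have := tendsto_iff_norm_sub_tendsto_zero.mp hg_t
    simpa [norm_sub_rev] using this
  rw [zero_mul] at hlim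
  have : ‖∫ t, u t * F t ∂μT‖ ≤ 0 := ge_of_tendsto' hlim hbound
  simpa using le_antisymm this (norm_nonneg _)

end FourierUniq

section AEInner
variable {K : Type} [NormedAddCommGroup K] [InnerProductSpace ℂ K] [CompleteSpace K]

/-- Core tool: if `⟪Uⁿ f, g⟫ = 0` for all `n`, then the pointwise inner ℂ products vanish a.e. -/
lemma ae_inner_eq_zero (f g : L2 K) (h : ∀ n : ℤ, (inner ℂ (mulF n f) g : ℂ) = 0) :
    ∀ᵐ t ∂μT, (inner ℂ ((f : 𝕋 → K) t) ((g : 𝕋 → K) t) : ℂ) = 0 := by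
  have hF : Integrable (fun t => (inner ℂ ((f : 𝕋 → K) t) ((g : 𝕋 → K) t) : ℂ)) μT :=
    L2.integrable_inner (𝕜 := ℂ) f g
  have := ae_eq_zero_of_forall_fourier hF (fun n => by
    have hn := h (-n)
    rw [inner_mulF_left] at hn
    simpa using hn)
  filter_upwards [this] with t ht
  simpa using ht

end AEInner



section ONZ
variable {K : Type} [NormedAddCommGroup K] [InnerProductSpace ℂ K] [CompleteSpace K]

/-- An "orthonormal-or-zero" family of vectors. -/
def ONZ (u : ℕ → K) : Prop :=
  (∀ n, ‖u n‖ = 1 ∨ u n = 0) ∧ ∀ i j, i ≠ j → (inner ℂ (u i) (u j) : ℂ) = 0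

lemma onz_inner_sum {u : ℕ → K} (hu : ONZ u) (c : ℕ → ℂ) (s : Finset ℕ) :
    (inner ℂ (∑ n ∈ s, c n • u n) (∑ n ∈ s, c n • u n) : ℂ)
      = ∑ i ∈ s, (starRingEnd ℂ) (c i) * c i * (inner ℂ (u i) (u i) : ℂ) := by
  rw [sum_inner]
  refine Finset.sum_congr rfl fun i hi => ?_
  rw [inner_sum, Finset.sum_eq_single_of_mem i hi]
  · rw [inner_smul_left, inner_smul_right]; ring
  · intro j hj hne
    rw [inner_smul_left, inner_smul_right, hu.2 i j (Ne.symm hne)]; ring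

lemma onz_norm_sum_sq {u : ℕ → K} (hu : ONZ u) (c : ℕ → ℂ) (s : Finset ℕ) :
    ‖∑ n ∈ s, c n • u n‖^2 = ∑ n ∈ s, ‖c n‖^2 * ‖u n‖^2 := by
  have h2 : ‖∑ n ∈ s, c n • u n‖^2
      = RCLike.re (inner ℂ (∑ n ∈ s, c n • u n) (∑ n ∈ s, c n • u n) : ℂ) :=
    (inner_self_eq_norm_sq (𝕜 := ℂ) _).symm
  rw [h2, onz_inner_sum hu c s, map_sum]
  refine Finset.sum_congr rfl fun i hi => ?_
  rw [RCLike.conj_mul, ← RCLike.ofReal_pow, RCLike.re_ofReal_mul, inner_self_eq_norm_sq]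

lemma onz_bessel {u : ℕ → K} (hu : ONZ u) (x : K) (s : Finset ℕ) :
    ∑ n ∈ s, ‖(inner ℂ (u n) x : ℂ)‖^2 ≤ ‖x‖^2 := by
  set c : ℕ → ℂ := fun n => (inner ℂ (u n) x : ℂ) with hc
  set S : K := ∑ n ∈ s, c n • u n with hSdef
  set A : ℝ := ∑ n ∈ s, ‖c n‖^2 with hA
  have hA0 : 0 ≤ A := Finset.sum_nonneg fun n _ => sq_nonneg _
  have hinner : RCLike.re (inner ℂ S x : ℂ) = A := by
    rw [hSdef, sum_inner, map_sum, hA]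
    refine Finset.sum_congr rfl fun n _ => ?_
    rw [inner_smul_left]
    show RCLike.re ((starRingEnd ℂ) (c n) * c n) = ‖c n‖^2
    rw [RCLike.conj_mul, ← RCLike.ofReal_pow, RCLike.ofReal_re]
  have h1 : A ≤ ‖S‖ * ‖x‖ := by
    calc A = RCLike.re (inner ℂ S x : ℂ) := hinner.symm
      _ ≤ ‖(inner ℂ S x : ℂ)‖ := RCLike.re_le_norm _
      _ ≤ ‖S‖ * ‖x‖ := norm_inner_le_norm _ _
  have h2 : ‖S‖^2 ≤ A := by
    rw [hSdef, onz_norm_sum_sq hu c s, hA]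
    refine Finset.sum_le_sum fun n _ => ?_
    rcases hu.1 n with h | h
    · rw [h, one_pow, mul_one]
    · rw [h, norm_zero]
      nlinarith [sq_nonneg (‖c n‖)]
  have h3 : A * A ≤ A * ‖x‖^2 := by
    have h4 : A * A ≤ (‖S‖ * ‖x‖) * (‖S‖ * ‖x‖) := mul_self_le_mul_self hA0 h1
    have h5 : ‖S‖^2 * ‖x‖^2 ≤ A * ‖x‖^2 := mul_le_mul_of_nonneg_right h2 (sq_nonneg _)
    nlinarith
  rcases eq_or_lt_of_le hA0 with h | h
  · rw [← h]; positivity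
  · exact (mul_le_mul_iff_right₀ h).mp h3

lemma onz_summable {u : ℕ → K} (hu : ONZ u) (x : K) :
    Summable (fun n => (inner ℂ (u n) x : ℂ) • u n) := by
  set c : ℕ → ℂ := fun n => (inner ℂ (u n) x : ℂ) with hc
  have hA : Summable fun n => ‖c n‖^2 :=
    summable_of_sum_range_le (fun n => sq_nonneg _) (fun n => onz_bessel hu x (Finset.range n))
  rw [summable_iff_cauchySeq_finset, cauchySeq_finset_iff_vanishing_norm]
  intro ε hε
  obtain ⟨s, hs⟩ := summable_iff_vanishing_norm.mp hA (ε^2) (by positivity)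
  refine ⟨s, fun t ht => ?_⟩
  have hb := hs t ht
  have hsum_le : ∑ n ∈ t, ‖c n‖^2 * ‖u n‖^2 ≤ ∑ n ∈ t, ‖c n‖^2 := by
    refine Finset.sum_le_sum fun n _ => ?_
    rcases hu.1 n with h | h
    · rw [h, one_pow, mul_one]
    · rw [h, norm_zero]; nlinarith [sq_nonneg (‖c n‖)]
  have hcal : ‖∑ n ∈ t, ‖c n‖^2‖ = ∑ n ∈ t, ‖c n‖^2 := by
    exact Real.norm_of_nonneg (Finset.sum_nonneg fun n _ => sq_nonneg _)
  rw [hcal] at hb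
  have hlt : ‖∑ n ∈ t, c n • u n‖^2 < ε^2 := by
    rw [onz_norm_sum_sq hu c t]; exact lt_of_le_of_lt hsum_le hb
  nlinarith [norm_nonneg (∑ n ∈ t, c n • u n), hε]

lemma projTo_eq (N : Submodule ℂ K) (hN : IsClosed (N : Set K)) (x : K) :
    haveI : CompleteSpace N := hN.completeSpace_coe
    projTo N x = (orthogonalProjection N x : K) := by
  rw [projTo, dif_pos hN]

lemma onz_projTo {u : ℕ → K} (hu : ONZ u) (x : K) :
    projTo ((span ℂ (Set.range u)).topologicalClosure) x
      = ∑' n, (inner ℂ (u n) x : ℂ) • u n := by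
  set N := (span ℂ (Set.range u)).topologicalClosure with hN
  have hNc : IsClosed (N : Set K) := Submodule.isClosed_topologicalClosure _
  haveI : CompleteSpace N := hNc.completeSpace_coe
  set c : ℕ → ℂ := fun n => (inner ℂ (u n) x : ℂ) with hc
  have hS : HasSum (fun n => c n • u n) (∑' n, c n • u n) := (onz_summable hu x).hasSum
  set S : K := ∑' n, c n • u n with hSdef
  have hinner_uS : ∀ m, (inner ℂ (u m) S : ℂ) = c m * (inner ℂ (u m) (u m) : ℂ) := by
    intro m
    have h1 : HasSum (fun n => (inner ℂ (u m) (c n • u n) : ℂ)) (inner ℂ (u m) S : ℂ) :=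
      (innerSL ℂ (u m)).hasSum hS
    have h2 : (∑' n, (inner ℂ (u m) (c n • u n) : ℂ)) = (inner ℂ (u m) (c m • u m) : ℂ) := by
      refine tsum_eq_single m fun n hn => ?_
      rw [inner_smul_right, hu.2 m n (Ne.symm hn), mul_zero]
    rw [← h1.tsum_eq, h2, inner_smul_right]
  have hSm : S ∈ N := by
    refine hNc.mem_of_tendsto hS.tendsto_sum_nat (Filter.Eventually.of_forall fun m => ?_)
    exact sum_mem fun i _ => Submodule.smul_mem _ _
      (Submodule.le_topologicalClosure _ (subset_span ⟨i, rfl⟩))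
  have hgen : ∀ m, (inner ℂ (x - S) (u m) : ℂ) = 0 := by
    intro m
    rcases hu.1 m with h | h
    · have huu : (inner ℂ (u m) (u m) : ℂ) = 1 := by
        rw [inner_self_eq_norm_sq_to_K, h]
        norm_num
      rw [← inner_eq_zero_symm, inner_sub_right, hinner_uS m, huu, mul_one, hc, sub_self]
    · rw [h, inner_zero_right]
  have hperp : ∀ w ∈ N, (inner ℂ (x - S) w : ℂ) = 0 := by
    have hclosed : IsClosed {w : K | (inner ℂ (x - S) w : ℂ) = 0} :=
      isClosed_eq (Continuous.inner continuous_const continuous_id) continuous_const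
    have hsub : (span ℂ (Set.range u) : Set K) ⊆ {w : K | (inner ℂ (x - S) w : ℂ) = 0} := by
      intro w hw
      induction hw using Submodule.span_induction with
      | mem w hw => obtain ⟨m, rfl⟩ := hw; exact hgen m
      | zero => simp
      | add a b _ _ iha ihb =>
          simp only [Set.mem_setOf_eq] at *
          rw [inner_add_right, iha, ihb, add_zero]
      | smul d a _ iha =>
          simp only [Set.mem_setOf_eq] at *
          rw [inner_smul_right, iha, mul_zero]
    intro w hw
    have hsubN : (N : Set K) ⊆ {w : K | (inner ℂ (x - S) w : ℂ) = 0} := by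
      rw [hN, Submodule.topologicalClosure_coe]
      exact closure_minimal hsub hclosed
    exact hsubN hw
  rw [projTo_eq N hNc x]
  exact Submodule.eq_starProjection_of_mem_of_inner_eq_zero hSm hperp

lemma projTo_top (x : K) : projTo (⊤ : Submodule ℂ K) x = x := by
  have hNc : IsClosed ((⊤ : Submodule ℂ K) : Set K) := by
    rw [Submodule.top_coe]; exact isClosed_univ
  haveI : CompleteSpace (⊤ : Submodule ℂ K) := hNc.completeSpace_coe
  rw [projTo_eq ⊤ hNc x]; exact Submodule.starProjection_eq_self_iff.mpr Submodule.mem_top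

end ONZ



section GS
variable {K : Type} [NormedAddCommGroup K] [InnerProductSpace ℂ K] [CompleteSpace K]

lemma stronglyMeasurable_gramSchmidt {v : ℕ → 𝕋 → K} (hv : ∀ n, StronglyMeasurable (v n)) :
    ∀ n, StronglyMeasurable (fun t => gramSchmidt ℂ (fun k => v k t) n) := by
  intro n
  induction n using Nat.strong_induction_on with
  | _ n ih =>
    have hrw : (fun t => gramSchmidt ℂ (fun k => v k t) n) = fun t =>
        v n t - ∑ i ∈ Finset.Iio n,
          (orthogonalProjection (ℂ ∙ gramSchmidt ℂ (fun k => v k t) i) (v n t) : K) :=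
      funext fun t => gramSchmidt_def ℂ (fun k => v k t) n
    rw [hrw]
    refine (hv n).sub (Finset.stronglyMeasurable_fun_sum _ fun i hi => ?_)
    have hlt : i < n := Finset.mem_Iio.mp hi
    have hgs := ih i hlt
    have hrw2 : (fun t =>
        (orthogonalProjection (ℂ ∙ gramSchmidt ℂ (fun k => v k t) i) (v n t) : K))
        = fun t => ((inner ℂ (gramSchmidt ℂ (fun k => v k t) i) (v n t) : ℂ)
            / RCLike.ofReal (‖gramSchmidt ℂ (fun k => v k t) i‖ ^ 2))
              • gramSchmidt ℂ (fun k => v k t) i :=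
      funext fun t => Submodule.starProjection_singleton ℂ (v n t)
    rw [hrw2]
    have mnum : Measurable fun t => (inner ℂ (gramSchmidt ℂ (fun k => v k t) i) (v n t) : ℂ) :=
      (hgs.inner (hv n)).measurable
    have mden : Measurable fun t =>
        (RCLike.ofReal (‖gramSchmidt ℂ (fun k => v k t) i‖ ^ 2) : ℂ) :=
      RCLike.measurable_ofReal.comp (hgs.norm.measurable.pow_const 2)
    exact ((mnum.div mden).stronglyMeasurable).smul hgs

lemma stronglyMeasurable_gramSchmidtNormed {v : ℕ → 𝕋 → K}
    (hv : ∀ n, StronglyMeasurable (v n)) (n : ℕ) :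
    StronglyMeasurable (fun t => gramSchmidtNormed ℂ (fun k => v k t) n) := by
  have hgs := stronglyMeasurable_gramSchmidt hv n
  have hrw : (fun t => gramSchmidtNormed ℂ (fun k => v k t) n)
      = fun t => ((RCLike.ofReal ‖gramSchmidt ℂ (fun k => v k t) n‖ : ℂ))⁻¹
          • gramSchmidt ℂ (fun k => v k t) n :=
    funext fun t => by simp only [gramSchmidtNormed]
  rw [hrw]
  exact (((RCLike.measurable_ofReal.comp hgs.norm.measurable).inv).stronglyMeasurable).smul hgs

lemma onz_gramSchmidtNormed (f : ℕ → K) : ONZ (fun n => gramSchmidtNormed ℂ f n) := by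
  constructor
  · intro n
    by_cases h : gramSchmidt ℂ f n = 0
    · right; simp only [gramSchmidtNormed, h, smul_zero]
    · left; simp only [gramSchmidtNormed]; exact norm_smul_inv_norm h
  · intro i j hij
    simp only [gramSchmidtNormed, inner_smul_left, inner_smul_right]
    rw [gramSchmidt_orthogonal ℂ f hij, mul_zero, mul_zero]

lemma span_gsn_topologicalClosure (f : ℕ → K) :
    (span ℂ (Set.range (fun n => gramSchmidtNormed ℂ f n))).topologicalClosure
      = (span ℂ (Set.range f)).topologicalClosure := by
  have h1 : span ℂ (Set.range (gramSchmidtNormed ℂ f)) = span ℂ (Set.range (gramSchmidt ℂ f)) := by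
    rw [← Set.image_univ, ← Set.image_univ (f := gramSchmidt ℂ f), span_gramSchmidtNormed]
  have h2 : span ℂ (Set.range (fun n => gramSchmidtNormed ℂ f n)) = span ℂ (Set.range f) := by
    rw [show (fun n => gramSchmidtNormed ℂ f n) = gramSchmidtNormed ℂ f from rfl, h1,
      span_gramSchmidt]
  rw [h2]

/-- The range function generated pointwise by a sequence of functions. -/
def spanJ (v : ℕ → 𝕋 → K) : 𝕋 → Submodule ℂ K :=
  fun t => (span ℂ (Set.range fun n => v n t)).topologicalClosure

lemma projTo_spanJ_eq_tsum (v : ℕ → 𝕋 → K) (t : 𝕋) (x : K) :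
    projTo (spanJ v t) x
      = ∑' n, (inner ℂ (gramSchmidtNormed ℂ (fun k => v k t) n) x : ℂ)
          • gramSchmidtNormed ℂ (fun k => v k t) n := by
  rw [spanJ, ← span_gsn_topologicalClosure (fun k => v k t),
    onz_projTo (onz_gramSchmidtNormed (fun k => v k t)) x]

lemma stronglyMeasurable_projTo_spanJ {v : ℕ → 𝕋 → K}
    (hv : ∀ n, StronglyMeasurable (v n)) (x : K) :
    StronglyMeasurable fun t => projTo (spanJ v t) x := by
  have hu : ∀ n, StronglyMeasurable
      (fun t => gramSchmidtNormed ℂ (fun k => v k t) n) :=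
    stronglyMeasurable_gramSchmidtNormed hv
  refine stronglyMeasurable_of_tendsto atTop (f := fun N t =>
      ∑ n ∈ Finset.range N, (inner ℂ (gramSchmidtNormed ℂ (fun k => v k t) n) x : ℂ)
        • gramSchmidtNormed ℂ (fun k => v k t) n)
    (fun N => Finset.stronglyMeasurable_fun_sum _ fun n _ =>
      ((hu n).inner stronglyMeasurable_const).smul (hu n))
    (tendsto_pi_nhds.mpr fun t => ?_)
  rw [projTo_spanJ_eq_tsum v t x]
  exact (onz_summable (onz_gramSchmidtNormed (fun k => v k t)) x).hasSum.tendsto_sum_nat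

lemma isMeasRange_spanJ {v : ℕ → 𝕋 → K} (hv : ∀ n, StronglyMeasurable (v n)) :
    IsMeasRange (spanJ v) :=
  ⟨fun _ => Submodule.isClosed_topologicalClosure _,
   fun x y => ((stronglyMeasurable_projTo_spanJ hv x).inner stronglyMeasurable_const).measurable⟩

end GS

section Pettis
variable {K : Type} [NormedAddCommGroup K] [InnerProductSpace ℂ K] [CompleteSpace K]
  [SecondCountableTopology K]

lemma stronglyMeasurable_of_forall_inner {g : 𝕋 → K}
    (h : ∀ y : K, Measurable fun t => (inner ℂ y (g t) : ℂ)) : StronglyMeasurable g := by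
  haveI : Nonempty K := ⟨0⟩
  obtain ⟨d, hd⟩ := TopologicalSpace.exists_dense_seq K
  set u : ℕ → K := fun n => gramSchmidtNormed ℂ d n with hudef
  have honz : ONZ u := onz_gramSchmidtNormed d
  have htop : (span ℂ (Set.range u)).topologicalClosure = ⊤ := by
    rw [hudef, span_gsn_topologicalClosure d, eq_top_iff]
    intro z _
    have hz : z ∈ ((span ℂ (Set.range d)).topologicalClosure : Set K) := by
      rw [Submodule.topologicalClosure_coe]
      exact (hd.mono subset_span) z
    exact hz
  have hg : ∀ t, g t = ∑' n, (inner ℂ (u n) (g t) : ℂ) • u n := by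
    intro t
    have hp := onz_projTo honz (g t)
    rw [htop, projTo_top] at hp
    exact hp
  refine stronglyMeasurable_of_tendsto atTop (f := fun N t =>
      ∑ n ∈ Finset.range N, (inner ℂ (u n) (g t) : ℂ) • u n)
    (fun N => Finset.stronglyMeasurable_fun_sum _ fun n _ =>
      ((h (u n)).stronglyMeasurable).smul_const (u n))
    (tendsto_pi_nhds.mpr fun t => ?_)
  have := (onz_summable honz (g t)).hasSum.tendsto_sum_nat
  rwa [← hg t] at this

end Pettis



section RangeMod
variable {K : Type} [NormedAddCommGroup K] [InnerProductSpace ℂ K] [CompleteSpace K]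

/-- The subspace of `L²(𝕋, K)` of functions taking values in `J t` a.e. -/
def rangeModule (J : 𝕋 → Submodule ℂ K) : Submodule ℂ (L2 K) where
  carrier := rangeSet J
  zero_mem' := by
    show ∀ᵐ t ∂μT, ((0 : L2 K) : 𝕋 → K) t ∈ J t
    filter_upwards [Lp.coeFn_zero K 2 μT] with t ht
    rw [ht]; exact (J t).zero_mem
  add_mem' := by
    intro a b ha hb
    show ∀ᵐ t ∂μT, ((a + b : L2 K) : 𝕋 → K) t ∈ J t
    filter_upwards [ha, hb, Lp.coeFn_add a b] with t ha' hb' hadd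
    rw [hadd]; exact (J t).add_mem ha' hb'
  smul_mem' := by
    intro c a ha
    show ∀ᵐ t ∂μT, ((c • a : L2 K) : 𝕋 → K) t ∈ J t
    filter_upwards [ha, Lp.coeFn_smul c a] with t ha' hsmul
    rw [hsmul]; exact (J t).smul_mem c ha'

lemma mem_rangeModule_iff {J : 𝕋 → Submodule ℂ K} {f : L2 K} :
    f ∈ rangeModule J ↔ f ∈ rangeSet J := Iff.rfl

lemma isClosed_rangeSet {J : 𝕋 → Submodule ℂ K} (hJ : ∀ t, IsClosed ((J t : Set K))) :
    IsClosed (rangeSet J) := by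
  rw [← isSeqClosed_iff_isClosed]
  intro f g hf hfg
  have heLp : Tendsto (fun n => eLpNorm ((f n : 𝕋 → K) - (g : 𝕋 → K)) 2 μT) atTop (𝓝 0) :=
    (Lp.tendsto_Lp_iff_tendsto_eLpNorm' f g).mp hfg
  have htm : TendstoInMeasure μT (fun n => (f n : 𝕋 → K)) atTop (g : 𝕋 → K) :=
    tendstoInMeasure_of_tendsto_eLpNorm (by norm_num : (2 : ℝ≥0∞) ≠ 0)
      (fun n => Lp.aestronglyMeasurable _) (Lp.aestronglyMeasurable _) heLp
  obtain ⟨ns, _, hae⟩ := htm.exists_seq_tendsto_ae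
  have hmem : ∀ᵐ t ∂μT, ∀ n : ℕ, (f n : 𝕋 → K) t ∈ J t := by
    rw [MeasureTheory.ae_all_iff]; exact fun n => hf n
  show ∀ᵐ t ∂μT, (g : 𝕋 → K) t ∈ J t
  filter_upwards [hae, hmem] with t h1 h2
  exact (hJ t).mem_of_tendsto h1 (Filter.Eventually.of_forall fun j => h2 (ns j))

lemma mulF_mem_rangeSet {J : 𝕋 → Submodule ℂ K} (n : ℤ) {f : L2 K} (hf : f ∈ rangeSet J) :
    mulF n f ∈ rangeSet J := by
  show ∀ᵐ t ∂μT, ((mulF n f : L2 K) : 𝕋 → K) t ∈ J t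
  filter_upwards [coeFn_mulF n f, hf] with t h1 h2
  rw [h1]; exact (J t).smul_mem _ h2

lemma reducing_of_coe_rangeSet (M : Submodule ℂ (L2 K)) (J : 𝕋 → Submodule ℂ K)
    (hM : (M : Set (L2 K)) = rangeSet J) : Reducing (mulF 1) M := by
  have hmem : ∀ (n : ℤ) (f : L2 K), f ∈ M → mulF n f ∈ M := by
    intro n f hf
    have : f ∈ rangeSet J := by rw [← hM]; exact hf
    have h2 := mulF_mem_rangeSet n this
    rw [show rangeSet J = (M : Set (L2 K)) from hM.symm] at h2
    exact h2
  constructor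
  · exact fun f hf => hmem 1 f hf
  · intro h hh
    rw [Submodule.mem_orthogonal] at hh ⊢
    intro u hu
    have hadj := inner_mulF_adj (-1) u h
    rw [neg_neg] at hadj
    rw [← hadj]
    exact hh _ (hmem (-1) u hu)

end RangeMod

section ProjLp
variable {K : Type} [NormedAddCommGroup K] [InnerProductSpace ℂ K] [CompleteSpace K]

lemma norm_projTo_le (N : Submodule ℂ K) (hN : IsClosed ((N : Set K))) (x : K) :
    ‖projTo N x‖ ≤ ‖x‖ := by
  haveI : CompleteSpace N := hN.completeSpace_coe
  rw [projTo_eq N hN x]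
  calc ‖(orthogonalProjection N x : K)‖ = ‖orthogonalProjection N x‖ := rfl
    _ ≤ ‖orthogonalProjection N‖ * ‖x‖ := (orthogonalProjection N).le_opNorm x
    _ ≤ 1 * ‖x‖ := mul_le_mul_of_nonneg_right (orthogonalProjection_norm_le N) (norm_nonneg x)
    _ = ‖x‖ := one_mul _

lemma projTo_mem (N : Submodule ℂ K) (hN : IsClosed ((N : Set K))) (x : K) :
    projTo N x ∈ N := by
  haveI : CompleteSpace N := hN.completeSpace_coe
  rw [projTo_eq N hN x]
  exact SetLike.coe_mem _

lemma projTo_eq_self (N : Submodule ℂ K) (hN : IsClosed ((N : Set K))) {x : K} (hx : x ∈ N) :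
    projTo N x = x := by
  haveI : CompleteSpace N := hN.completeSpace_coe
  rw [projTo_eq N hN x]
  exact Submodule.starProjection_eq_self_iff.mpr hx

variable [SecondCountableTopology K]

lemma stronglyMeasurable_projTo {J : 𝕋 → Submodule ℂ K} (hJ : IsMeasRange J) (x : K) :
    StronglyMeasurable fun t => projTo (J t) x := by
  refine stronglyMeasurable_of_forall_inner fun y => ?_
  have h1 := hJ.2 x y
  have h2 : (fun t => (inner ℂ y (projTo (J t) x) : ℂ))
      = fun t => (starRingEnd ℂ) ((inner ℂ (projTo (J t) x) y : ℂ)) := by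
    funext t; rw [← inner_conj_symm]
  rw [h2]
  exact (continuous_star.measurable).comp h1

lemma memLp_projTo {J : 𝕋 → Submodule ℂ K} (hJ : IsMeasRange J) (x : K) :
    MemLp (fun t => projTo (J t) x) 2 μT := by
  refine MemLp.of_bound (stronglyMeasurable_projTo hJ x).aestronglyMeasurable ‖x‖ ?_
  exact Filter.Eventually.of_forall fun t => norm_projTo_le (J t) (hJ.1 t) x

/-- The a.e. projection of the constant function `x` onto the range function `J`,
as an element of `L²`. -/
def projLp (J : 𝕋 → Submodule ℂ K) (hJ : IsMeasRange J) (x : K) : L2 K :=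
  (memLp_projTo hJ x).toLp _

lemma coeFn_projLp (J : 𝕋 → Submodule ℂ K) (hJ : IsMeasRange J) (x : K) :
    (projLp J hJ x : 𝕋 → K) =ᵐ[μT] fun t => projTo (J t) x :=
  MemLp.coeFn_toLp _

lemma projLp_mem_rangeSet (J : 𝕋 → Submodule ℂ K) (hJ : IsMeasRange J) (x : K) :
    projLp J hJ x ∈ rangeSet J := by
  show ∀ᵐ t ∂μT, ((projLp J hJ x : L2 K) : 𝕋 → K) t ∈ J t
  filter_upwards [coeFn_projLp J hJ x] with t ht
  rw [ht]; exact projTo_mem (J t) (hJ.1 t) x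

lemma le_of_projTo_mem {N₁ N₂ : Submodule ℂ K} (h₁ : IsClosed ((N₁ : Set K)))
    (h₂ : IsClosed ((N₂ : Set K))) {d : ℕ → K} (hd : DenseRange d)
    (h : ∀ k, projTo N₁ (d k) ∈ N₂) : N₁ ≤ N₂ := by
  haveI : CompleteSpace N₁ := h₁.completeSpace_coe
  intro v hv
  obtain ⟨y, hy_mem, hy_t⟩ := mem_closure_iff_seq_limit.mp (hd.closure_range ▸ Set.mem_univ v)
  choose k hk using hy_mem
  have hcont : Tendsto (fun j => projTo N₁ (y j)) atTop (𝓝 (projTo N₁ v)) := by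
    have hP : Continuous fun z : K => projTo N₁ z := by
      have : (fun z : K => projTo N₁ z)
          = fun z : K => ((orthogonalProjection N₁ z : N₁) : K) :=
        funext fun z => projTo_eq N₁ h₁ z
      rw [this]
      exact continuous_subtype_val.comp (orthogonalProjection N₁).continuous
    exact (hP.tendsto v).comp hy_t
  rw [projTo_eq_self N₁ h₁ hv] at hcont
  refine h₂.mem_of_tendsto hcont (Filter.Eventually.of_forall fun j => ?_)
  rw [← hk j]
  exact h (k j)

/-- If every element of `rangeSet J₁` lies in `rangeSet J₂`, with `J₁` a measurable range
function and `J₂` pointwise closed, then `J₁ t ≤ J₂ t` a.e. -/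
lemma ae_le_of_rangeSet_subset {J₁ J₂ : 𝕋 → Submodule ℂ K} (h₁ : IsMeasRange J₁)
    (h₂ : ∀ t, IsClosed ((J₂ t : Set K))) (hsub : rangeSet J₁ ⊆ rangeSet J₂) :
    ∀ᵐ t ∂μT, J₁ t ≤ J₂ t := by
  haveI : Nonempty K := ⟨0⟩
  obtain ⟨d, hd⟩ := TopologicalSpace.exists_dense_seq K
  have hmem : ∀ᵐ t ∂μT, ∀ k : ℕ, projTo (J₁ t) (d k) ∈ J₂ t := by
    rw [MeasureTheory.ae_all_iff]
    intro k
    have h2 := hsub (projLp_mem_rangeSet J₁ h₁ (d k))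
    filter_upwards [h2, coeFn_projLp J₁ h₁ (d k)] with t ht hco
    rwa [hco] at ht
  filter_upwards [hmem] with t ht
  exact le_of_projTo_mem (h₁.1 t) (h₂ t) hd ht

lemma ae_eq_of_rangeSet_eq {J₁ J₂ : 𝕋 → Submodule ℂ K} (h₁ : IsMeasRange J₁)
    (h₂ : IsMeasRange J₂) (h : rangeSet J₁ = rangeSet J₂) : ∀ᵐ t ∂μT, J₁ t = J₂ t := by
  filter_upwards [ae_le_of_rangeSet_subset h₁ h₂.1 h.le,
    ae_le_of_rangeSet_subset h₂ h₁.1 h.ge] with t ht1 ht2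
  exact le_antisymm ht1 ht2

end ProjLp



section SpanPerp
variable {K : Type} [NormedAddCommGroup K] [InnerProductSpace ℂ K] [CompleteSpace K]

/-- Orthogonality to a set extends to the closure of its span (left slot). -/
lemma inner_left_eq_zero_on_span_closure {S : Set K} {z : K} (h : ∀ w ∈ S, (inner ℂ w z : ℂ) = 0) :
    ∀ w ∈ (span ℂ S).topologicalClosure, (inner ℂ w z : ℂ) = 0 := by
  have hclosed : IsClosed {w : K | (inner ℂ w z : ℂ) = 0} :=
    isClosed_eq (Continuous.inner continuous_id continuous_const) continuous_const
  have hsub : (span ℂ S : Set K) ⊆ {w : K | (inner ℂ w z : ℂ) = 0} := by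
    intro w hw
    induction hw using Submodule.span_induction with
    | mem w hw => exact h w hw
    | zero => simp
    | add a b _ _ iha ihb =>
        simp only [Set.mem_setOf_eq] at *
        rw [inner_add_left, iha, ihb, add_zero]
    | smul c a _ iha =>
        simp only [Set.mem_setOf_eq] at *
        rw [inner_smul_left, iha, mul_zero]
  intro w hw
  have : ((span ℂ S).topologicalClosure : Set K) ⊆ {w : K | (inner ℂ w z : ℂ) = 0} := by
    rw [Submodule.topologicalClosure_coe]
    exact closure_minimal hsub hclosed
  exact this hw

/-- The key pointwise linear-algebra lemma for the forward direction. -/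
lemma mem_span_closure_of_perp {G d : ℕ → K} (hd : DenseRange d) {x : K}
    (h1 : ∀ k, (inner ℂ x (d k - G k) : ℂ) = 0)
    (h2 : ∀ j k, (inner ℂ (G j) (d k - G k) : ℂ) = 0) :
    x ∈ (span ℂ (Set.range G)).topologicalClosure := by
  set N := (span ℂ (Set.range G)).topologicalClosure with hN
  have hNc : IsClosed ((N : Set K)) := Submodule.isClosed_topologicalClosure _
  haveI : CompleteSpace N := hNc.completeSpace_coe
  set y := projTo N x with hy
  have hyN : y ∈ N := projTo_mem N hNc x
  have huperp : x - y ∈ Nᗮ := by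
    rw [hy, projTo_eq N hNc x]
    exact Submodule.sub_starProjection_mem_orthogonal x
  have hyperp : ∀ k, (inner ℂ y (d k - G k) : ℂ) = 0 := fun k =>
    inner_left_eq_zero_on_span_closure (fun w hw => by
      obtain ⟨j, rfl⟩ := hw; exact h2 j k) y hyN
  have hudk : ∀ k, (inner ℂ (x - y) (d k) : ℂ) = 0 := by
    intro k
    have e1 : (inner ℂ (x - y) (d k - G k) : ℂ) = 0 := by
      rw [inner_sub_left, h1 k, hyperp k, sub_zero]
    have e2 : (inner ℂ (x - y) (G k) : ℂ) = 0 := by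
      rw [inner_eq_zero_symm]
      exact (Submodule.mem_orthogonal N (x - y)).mp huperp (G k)
        (Submodule.le_topologicalClosure _ (subset_span ⟨k, rfl⟩))
    have := inner_sub_right (𝕜 := ℂ) (x - y) (d k) (G k)
    rw [e2] at this
    rw [← sub_zero (inner ℂ (x - y) (d k) : ℂ), ← this, e1]
  have hall : ∀ w : K, (inner ℂ (x - y) w : ℂ) = 0 := by
    intro w
    have hclosed : IsClosed {w : K | (inner ℂ (x - y) w : ℂ) = 0} :=
      isClosed_eq (Continuous.inner continuous_const continuous_id) continuous_const
    have hsub : Set.range d ⊆ {w : K | (inner ℂ (x - y) w : ℂ) = 0} := by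
      rintro _ ⟨k, rfl⟩; exact hudk k
    have : closure (Set.range d) ⊆ {w : K | (inner ℂ (x - y) w : ℂ) = 0} :=
      closure_minimal hsub hclosed
    rw [hd.closure_range] at this
    exact this (Set.mem_univ w)
  have hxy : x - y = 0 := by
    have := hall (x - y)
    rwa [inner_self_eq_zero] at this
  have : x = y := by rw [← sub_eq_zero]; exact hxy
  rw [this]
  exact hyN

end SpanPerp

section ProjComm
variable {K : Type} [NormedAddCommGroup K] [InnerProductSpace ℂ K] [CompleteSpace K]
variable (M : Submodule ℂ (L2 K))

/-- The orthogonal projection onto a closed subspace of `L²`, as a map `L² → L²`. -/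
def PM [CompleteSpace M] : L2 K → L2 K := fun f => (orthogonalProjection M f : L2 K)

variable [CompleteSpace M]

lemma PM_mem (f : L2 K) : PM M f ∈ M := SetLike.coe_mem _

lemma PM_sub_mem (f : L2 K) : f - PM M f ∈ Mᗮ := Submodule.sub_starProjection_mem_orthogonal f

lemma PM_self_adjoint (f g : L2 K) : (inner ℂ (PM M f) g : ℂ) = inner ℂ f (PM M g) :=
  Submodule.inner_starProjection_left_eq_right (K := M) f g

lemma PM_eq_self {f : L2 K} (hf : f ∈ M) : PM M f = f :=
  Submodule.starProjection_eq_self_iff.mpr hf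

lemma PM_comm_mulF_one (hred : Reducing (mulF 1) M) (f : L2 K) :
    PM M (mulF 1 f) = mulF 1 (PM M f) := by
  refine Submodule.eq_starProjection_of_mem_of_inner_eq_zero (hred.1 _ (PM_mem M f)) ?_
  intro w hw
  have hmem : mulF 1 f - mulF 1 (PM M f) ∈ Mᗮ := by
    rw [← map_sub]
    exact hred.2 _ (PM_sub_mem M f)
  rw [inner_eq_zero_symm]
  exact (Submodule.mem_orthogonal M _).mp hmem w hw

lemma PM_comm_mulF_neg_one (hred : Reducing (mulF 1) M) (f : L2 K) :
    PM M (mulF (-1) f) = mulF (-1) (PM M f) := by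
  refine ext_inner_left ℂ fun g => ?_
  calc (inner ℂ g (PM M (mulF (-1) f)) : ℂ)
      = inner ℂ (PM M g) (mulF (-1) f) := (PM_self_adjoint M g _).symm
    _ = inner ℂ (mulF 1 (PM M g)) f := (inner_mulF_adj 1 (PM M g) f).symm
    _ = inner ℂ (PM M (mulF 1 g)) f := by rw [PM_comm_mulF_one M hred]
    _ = inner ℂ (mulF 1 g) (PM M f) := PM_self_adjoint M _ f
    _ = inner ℂ g (mulF (-1) (PM M f)) := inner_mulF_adj 1 g (PM M f)

lemma PM_comm_mulF (hred : Reducing (mulF 1) M) (n : ℤ) (f : L2 K) :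
    PM M (mulF n f) = mulF n (PM M f) := by
  induction n using Int.induction_on with
  | zero => rw [mulF_zero_apply, mulF_zero_apply]
  | succ k ih =>
      have h1 : mulF ((k : ℤ) + 1) f = mulF 1 (mulF k f) := by rw [mulF_mulF_s5, add_comm]
      have h2 : mulF ((k : ℤ) + 1) (PM M f) = mulF 1 (mulF k (PM M f)) := by
        rw [mulF_mulF_s5, add_comm]
      rw [h1, h2, PM_comm_mulF_one M hred, ih]
  | pred k ih =>
      have h1 : mulF (-(k : ℤ) - 1) f = mulF (-1) (mulF (-k) f) := by
        rw [mulF_mulF_s5]; ring_nf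
      have h2 : mulF (-(k : ℤ) - 1) (PM M f) = mulF (-1) (mulF (-k) (PM M f)) := by
        rw [mulF_mulF_s5]; ring_nf
      rw [h1, h2, PM_comm_mulF_neg_one M hred, ih]

lemma mulF_mem_of_reducing (hred : Reducing (mulF 1) M) (n : ℤ) {f : L2 K} (hf : f ∈ M) :
    mulF n f ∈ M := by
  have : PM M (mulF n f) = mulF n f := by
    rw [PM_comm_mulF M hred n f, PM_eq_self M hf]
  rw [← this]
  exact PM_mem M _

end ProjComm



section Forward
variable {K : Type} [NormedAddCommGroup K] [InnerProductSpace ℂ K] [CompleteSpace K]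
  [SecondCountableTopology K]

theorem exists_measRange_of_reducing (M : Submodule ℂ (L2 K))
    (hMc : IsClosed ((M : Set (L2 K)))) (hred : Reducing (mulF 1) M) :
    ∃ J : 𝕋 → Submodule ℂ K, IsMeasRange J ∧ (M : Set (L2 K)) = rangeSet J := by
  haveI : CompleteSpace M := hMc.completeSpace_coe
  haveI : Nonempty K := ⟨0⟩
  obtain ⟨d, hd⟩ := TopologicalSpace.exists_dense_seq K
  set e : ℕ → L2 K := fun k => expVec K 0 (d k) with he
  set g : ℕ → L2 K := fun k => PM M (e k) with hg
  have hGm : ∀ k, AEStronglyMeasurable ((g k : 𝕋 → K)) μT := fun k => Lp.aestronglyMeasurable _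
  set G : ℕ → 𝕋 → K := fun k => (hGm k).mk _ with hG
  have hGsm : ∀ k, StronglyMeasurable (G k) := fun k => (hGm k).stronglyMeasurable_mk
  have hGae : ∀ k, (g k : 𝕋 → K) =ᵐ[μT] G k := fun k => (hGm k).ae_eq_mk
  refine ⟨spanJ G, isMeasRange_spanJ hGsm, ?_⟩
  have he_coe : ∀ k, (e k : 𝕋 → K) =ᵐ[μT] fun _ => d k := by
    intro k
    filter_upwards [coeFn_expVec K 0 (d k)] with t ht
    show ((expVec K 0 (d k) : L2 K) : 𝕋 → K) t = d k
    rw [ht, fourier_zero, one_smul]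
  have fact1 : ∀ h : L2 K, h ∈ Mᗮ → ∀ k, ∀ᵐ t ∂μT,
      (inner ℂ (G k t) ((h : 𝕋 → K) t) : ℂ) = 0 := by
    intro h hh k
    have hz : ∀ n : ℤ, (inner ℂ (mulF n (g k)) h : ℂ) = 0 := by
      intro n
      have hcomm : mulF n (g k) = PM M (mulF n (e k)) := by
        rw [hg]; exact (PM_comm_mulF M hred n (e k)).symm
      rw [hcomm]
      exact (Submodule.mem_orthogonal M h).mp hh _ (PM_mem M _)
    have hae := ae_inner_eq_zero (g k) h hz
    filter_upwards [hae, hGae k] with t h1 h2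
    rw [← h2]; exact h1
  have hw_mem : ∀ k, e k - g k ∈ Mᗮ := fun k => PM_sub_mem M (e k)
  have hw_coe : ∀ k, ((e k - g k : L2 K) : 𝕋 → K) =ᵐ[μT] fun t => d k - G k t := by
    intro k
    filter_upwards [Lp.coeFn_sub (e k) (g k), he_coe k, hGae k] with t h1 h2 h3
    rw [h1, Pi.sub_apply, h2, h3]
  have fact2 : ∀ f : L2 K, f ∈ M → ∀ k, ∀ᵐ t ∂μT,
      (inner ℂ ((f : 𝕋 → K) t) (d k - G k t) : ℂ) = 0 := by
    intro f hf k
    have hz : ∀ n : ℤ, (inner ℂ (mulF n f) (e k - g k) : ℂ) = 0 := fun n =>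
      (Submodule.mem_orthogonal M _).mp (hw_mem k) _ (mulF_mem_of_reducing M hred n hf)
    have hae := ae_inner_eq_zero f (e k - g k) hz
    filter_upwards [hae, hw_coe k] with t h1 h2
    rw [h2] at h1
    exact h1
  ext f
  simp only [SetLike.mem_coe]
  constructor
  · intro hf
    show ∀ᵐ t ∂μT, (f : 𝕋 → K) t ∈ spanJ G t
    have h2 : ∀ᵐ t ∂μT, ∀ k, (inner ℂ ((f : 𝕋 → K) t) (d k - G k t) : ℂ) = 0 := by
      rw [MeasureTheory.ae_all_iff]; exact fun k => fact2 f hf k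
    have h3 : ∀ᵐ t ∂μT, ∀ j k, (inner ℂ (G j t) (d k - G k t) : ℂ) = 0 := by
      rw [MeasureTheory.ae_all_iff]
      intro j
      rw [MeasureTheory.ae_all_iff]
      intro k
      have hjk := fact2 (g j) (by rw [hg]; exact PM_mem M (e j)) k
      filter_upwards [hjk, hGae j] with t h1 hje
      rw [hje] at h1
      exact h1
    filter_upwards [h2, h3] with t ht2 ht3
    exact mem_span_closure_of_perp hd (fun k => ht2 k) (fun j k => ht3 j k)
  · intro hf
    have hM2 : Mᗮᗮ = M := Submodule.orthogonal_orthogonal M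
    rw [← hM2, Submodule.mem_orthogonal]
    intro h hh
    rw [MeasureTheory.L2.inner_def]
    have hfact : ∀ᵐ t ∂μT, ∀ k, (inner ℂ (G k t) ((h : 𝕋 → K) t) : ℂ) = 0 := by
      rw [MeasureTheory.ae_all_iff]; exact fun k => fact1 h hh k
    have hvanish : ∀ᵐ t ∂μT, (inner ℂ ((h : 𝕋 → K) t) ((f : 𝕋 → K) t) : ℂ) = 0 := by
      filter_upwards [hfact, hf] with t h1 h2
      have hperp : (inner ℂ ((f : 𝕋 → K) t) ((h : 𝕋 → K) t) : ℂ) = 0 :=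
        inner_left_eq_zero_on_span_closure
          (fun w hw => by obtain ⟨k, rfl⟩ := hw; exact h1 k) _ h2
      rw [inner_eq_zero_symm] at hperp
      exact hperp
    rw [integral_congr_ae hvanish, integral_zero]

end Forward


end Additions

section Statements

variable (K : Type) [NormedAddCommGroup K] [InnerProductSpace ℂ K] [CompleteSpace K]
  [SecondCountableTopology K]

theorem statement5 :
    (∀ M : Submodule ℂ (L2 K), IsClosed ((M : Set (L2 K))) →
      (Reducing (mulF 1) M ↔
        ∃ J : 𝕋 → Submodule ℂ K, IsMeasRange J ∧ (M : Set (L2 K)) = rangeSet J)) ∧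
    (∀ J : 𝕋 → Submodule ℂ K, IsMeasRange J →
      ∃ M : Submodule ℂ (L2 K), IsClosed ((M : Set (L2 K))) ∧ Reducing (mulF 1) M ∧
        (M : Set (L2 K)) = rangeSet J) ∧
    (∀ J₁ J₂ : 𝕋 → Submodule ℂ K, IsMeasRange J₁ → IsMeasRange J₂ →
      rangeSet J₁ = rangeSet J₂ → ∀ᵐ t ∂μT, J₁ t = J₂ t) ∧
    (∀ (M : Submodule ℂ (L2 K)) (J : 𝕋 → Submodule ℂ K), IsMeasRange J →
      (M : Set (L2 K)) = rangeSet J →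
      ∀ (ι : Type) (_ : Countable ι) (A : ι → L2 K),
        M = (Submodule.span ℂ
              {g : L2 K | ∃ (i : ι) (k : ℤ), g = mulF k (A i)}).topologicalClosure →
        ∀ᵐ t ∂μT, J t =
          (Submodule.span ℂ {v : K | ∃ i : ι, v = (A i : 𝕋 → K) t}).topologicalClosure) := by

  refine ⟨?_, ?_, ?_, ?_⟩
  · intro M hMc
    constructor
    · intro hred
      exact exists_measRange_of_reducing M hMc hred
    · rintro ⟨J, _, hM⟩
      exact reducing_of_coe_rangeSet M J hM
  · intro J hJ
    exact ⟨rangeModule J, isClosed_rangeSet hJ.1, reducing_of_coe_rangeSet _ J rfl, rfl⟩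
  · intro J₁ J₂ h₁ h₂ h
    exact ae_eq_of_rangeSet_eq h₁ h₂ h
  · intro M J hJ hMJ ι hι A hMspan
    haveI : Countable ι := hι
    set J' : 𝕋 → Submodule ℂ K :=
      fun t => (span ℂ {v : K | ∃ i : ι, v = (A i : 𝕋 → K) t}).topologicalClosure with hJ'
    have hJ'c : ∀ t, IsClosed ((J' t : Set K)) :=
      fun t => Submodule.isClosed_topologicalClosure _
    have hAmem : ∀ i, A i ∈ rangeSet J' := by
      intro i
      show ∀ᵐ t ∂μT, (A i : 𝕋 → K) t ∈ J' t
      refine Filter.Eventually.of_forall fun t => ?_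
      exact Submodule.le_topologicalClosure _ (subset_span ⟨i, rfl⟩)
    have hMle : M ≤ rangeModule J' := by
      rw [hMspan]
      refine Submodule.topologicalClosure_minimal _ ?_ (isClosed_rangeSet hJ'c)
      rw [Submodule.span_le]
      rintro x ⟨i, k, rfl⟩
      exact mulF_mem_rangeSet k (hAmem i)
    have hsub : rangeSet J ⊆ rangeSet J' := by
      rw [← hMJ]
      intro x hx
      exact hMle hx
    have hle1 : ∀ᵐ t ∂μT, J t ≤ J' t := ae_le_of_rangeSet_subset hJ hJ'c hsub
    have hAinM : ∀ i, A i ∈ M := by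
      intro i
      rw [hMspan]
      refine Submodule.le_topologicalClosure _ (subset_span ?_)
      exact ⟨i, 0, (mulF_zero_apply (A i)).symm⟩
    have hAJt : ∀ᵐ t ∂μT, ∀ i, (A i : 𝕋 → K) t ∈ J t := by
      rw [MeasureTheory.ae_all_iff]
      intro i
      have : A i ∈ rangeSet J := by rw [← hMJ]; exact hAinM i
      exact this
    have hle2 : ∀ᵐ t ∂μT, J' t ≤ J t := by
      filter_upwards [hAJt] with t ht
      refine Submodule.topologicalClosure_minimal _ ?_ (hJ.1 t)
      rw [Submodule.span_le]
      rintro v ⟨i, rfl⟩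
      exact ht i
    filter_upwards [hle1, hle2] with t h1 h2
    exact le_antisymm h1 h2

end Statements

end ShiftPaper
end
end

section
/- Let H be a complex Hilbert space, let T be an isometry on H, and let V be a partial isometry on H that commutes with T. Then the initial space of V is reducing for T. -/
open scoped InnerProductSpace

theorem statement15 {H : Type*} [NormedAddCommGroup H] [InnerProductSpace ℂ H] [CompleteSpace H]
    (T V : H →L[ℂ] H) (hT : Isometry T)
    (W : Submodule ℂ H) (hWc : IsClosed ((W : Set H)))
    (hV1 : ∀ f ∈ W, ‖V f‖ = ‖f‖) (hV2 : ∀ f ∈ Wᗮ, V f = 0)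
    (hcomm : ∀ f, V (T f) = T (V f)) :
    (∀ f ∈ W, T f ∈ W) ∧ (∀ f ∈ Wᗮ, T f ∈ Wᗮ) := by
  haveI : CompleteSpace W := hWc.completeSpace_coe
  have hTnorm : ∀ x : H, ‖T x‖ = ‖x‖ := by
    intro x
    simpa using hT.norm_map_of_map_zero (map_zero T) x
  have key : ∀ f : H, ∀ w ∈ W, ∀ w' ∈ Wᗮ, T f = w + w' → ‖V (T f)‖ = ‖w‖ := by
    intro f w hw w' hw' heq
    rw [heq, map_add, hV2 w' hw', add_zero, hV1 w hw]
  constructor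
  · intro f hf
    obtain ⟨w, hw, w', hw', heq⟩ := Submodule.exists_add_mem_mem_orthogonal (K := W) (T f)
    have h1 : ‖V (T f)‖ = ‖w‖ := key f w hw w' hw' heq
    have h2 : ‖V (T f)‖ = ‖T f‖ := by
      rw [hcomm, hTnorm, hV1 f hf, ← hTnorm f]
    have hinner : ⟪w, w'⟫_ℂ = 0 := Submodule.inner_right_of_mem_orthogonal hw hw'
    have hsq : ‖T f‖ * ‖T f‖ = ‖w‖ * ‖w‖ + ‖w'‖ * ‖w'‖ := by
      rw [heq]
      exact norm_add_sq_eq_norm_sq_add_norm_sq_of_inner_eq_zero w w' hinner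
    have hw0 : ‖w'‖ = 0 := by
      have hwe : ‖w‖ = ‖T f‖ := by rw [← h1, h2]
      rw [hwe] at hsq
      have : ‖w'‖ * ‖w'‖ = 0 := by linarith
      simpa using mul_self_eq_zero.mp this
    have : w' = 0 := norm_eq_zero.mp hw0
    rw [heq, this, add_zero]
    exact hw
  · intro f hf
    obtain ⟨w, hw, w', hw', heq⟩ := Submodule.exists_add_mem_mem_orthogonal (K := W) (T f)
    have h1 : ‖V (T f)‖ = ‖w‖ := key f w hw w' hw' heq
    have h2 : V (T f) = 0 := by rw [hcomm, hV2 f hf, map_zero]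
    have : w = 0 := by
      have := h1.symm
      rw [h2, norm_zero] at h1
      exact norm_eq_zero.mp h1.symm
    rw [heq, this, zero_add]
    exact hw'
end
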